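/- arXiv:1511.02391 — 3 statements merged into one kernel-verified Lean document; each statement's English description precedes it below -/
import Mathlib

section
/- Let H be a connected q-regular graph of order n ≥ 2 having at least one edge, with least adjacency eigenvalue λ_n(H). Then for every integer k ≥ 1, the least adjacency eigenvalue of the lexicographic power H^k equals n^{k−1}·λ_n(H) + q·(n^{k−1} − 1)/(n − 1). -/
open Matrix Finset

universe u

/-- The lexicographic product `H[G]` of two simple graphs. -/
def lexProd {α β : Type u} (H : SimpleGraph α) (G : SimpleGraph β) :
    SimpleGraph (α × β) where
  Adj x y := H.Adj x.1 y.1 ∨ (x.1 = y.1 ∧ G.Adj x.2 y.2)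
  symm := ⟨fun x y h => by
    rcases h with h | ⟨h1, h2⟩
    · exact Or.inl (H.symm.symm _ _ h)
    · exact Or.inr ⟨h1.symm, G.symm.symm _ _ h2⟩⟩
  loopless := ⟨fun x h => by
    rcases h with h | ⟨_, h2⟩
    · exact H.loopless.irrefl _ h
    · exact G.loopless.irrefl _ h2⟩

/-- Vertex type of the iterated lexicographic product `H^k[G]`. -/
def lexIterVert (α β : Type u) : ℕ → Type u
  | 0 => β
  | k + 1 => α × lexIterVert α β k

/-- Iterated lexicographic product: `H^0[G] = G`, `H^k[G] = H[H^{k-1}[G]]`. -/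
def lexIter {α β : Type u} (H : SimpleGraph α) (G : SimpleGraph β) :
    (k : ℕ) → SimpleGraph (lexIterVert α β k)
  | 0 => G
  | k + 1 => lexProd H (lexIter H G k)

instance lexIterVert.instFintype {α β : Type u} [Fintype α] [Fintype β] :
    ∀ k, Fintype (lexIterVert α β k)
  | 0 => inferInstanceAs (Fintype β)
  | k + 1 =>
      letI := lexIterVert.instFintype (α := α) (β := β) k
      inferInstanceAs (Fintype (α × lexIterVert α β k))

/-- Vertex type of the lexicographic power `H^k` (with `H^0 = K_1`). -/
def powVert (α : Type u) : ℕ → Type u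
  | 0 => PUnit
  | 1 => α
  | k + 2 => powVert α (k + 1) × α

/-- Lexicographic powers of a graph: `H^1 = H` and `H^k = H^{k-1}[H]` for `k ≥ 2`. -/
def lexPow {α : Type u} (H : SimpleGraph α) : (k : ℕ) → SimpleGraph (powVert α k)
  | 0 => ⊥
  | 1 => H
  | k + 2 => lexProd (lexPow H (k + 1)) H

instance powVert.instFintype {α : Type u} [Fintype α] : ∀ k, Fintype (powVert α k)
  | 0 => inferInstanceAs (Fintype PUnit)
  | 1 => inferInstanceAs (Fintype α)
  | k + 2 =>
      letI := powVert.instFintype (α := α) (k + 1)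
      inferInstanceAs (Fintype (powVert α (k + 1) × α))

/-- The degree of a vertex. -/
noncomputable def gdeg {α : Type u} [Fintype α] (G : SimpleGraph α) (v : α) : ℕ := by
  classical exact G.degree v

/-- The adjacency spectrum of a graph, as the multiset of roots (eigenvalues, with
multiplicity) of the characteristic polynomial of its adjacency matrix over `ℝ`. -/
noncomputable def adjSpectrum {α : Type u} [Fintype α] (G : SimpleGraph α) : Multiset ℝ := by
  classical exact (Matrix.charpoly (G.adjMatrix ℝ)).roots

/-- The Laplacian spectrum of a graph, as the multiset of roots (eigenvalues, with
multiplicity) of the characteristic polynomial of its Laplacian matrix over `ℝ`. -/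
noncomputable def lapSpectrum {α : Type u} [Fintype α] (G : SimpleGraph α) : Multiset ℝ := by
  classical exact (Matrix.charpoly (G.lapMatrix ℝ)).roots
open Polynomial
open scoped Classical


section MatrixLemmas
variable {β : Type u} [Fintype β]

lemma myEval_charpoly (A : Matrix β β ℝ) (x : ℝ) :
    A.charpoly.eval x = (x • (1 : Matrix β β ℝ) - A).det := by
  rw [Matrix.charpoly, ← Polynomial.coe_evalRingHom, RingHom.map_det]
  congr 1
  ext i j
  by_cases h : i = j <;>
    simp [h, charmatrix_apply, Matrix.one_apply, Matrix.diagonal_apply, Matrix.smul_apply]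

lemma root_charpoly_iff (A : Matrix β β ℝ) (x : ℝ) :
    x ∈ A.charpoly.roots ↔ ∃ v, v ≠ 0 ∧ A *ᵥ v = x • v := by
  rw [Polynomial.mem_roots (A.charpoly_monic.ne_zero), Polynomial.IsRoot,
    myEval_charpoly, ← Matrix.exists_mulVec_eq_zero_iff]
  constructor
  · rintro ⟨v, hv, h⟩
    refine ⟨v, hv, ?_⟩
    rwa [Matrix.sub_mulVec, Matrix.smul_mulVec, Matrix.one_mulVec, sub_eq_zero,
      eq_comm] at h
  · rintro ⟨v, hv, h⟩
    refine ⟨v, hv, ?_⟩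
    rw [Matrix.sub_mulVec, Matrix.smul_mulVec, Matrix.one_mulVec, sub_eq_zero, h]

end MatrixLemmas

section Herm
variable {β : Type u} [Fintype β]

lemma charpoly_conj_unitary (U : Matrix.unitaryGroup β ℝ) (D : Matrix β β ℝ) :
    ((U : Matrix β β ℝ) * D * star (U : Matrix β β ℝ)).charpoly = D.charpoly := by
  set mC : Matrix β β ℝ →+* Matrix β β ℝ[X] := (Polynomial.C : ℝ →+* ℝ[X]).mapMatrix with hmC
  have hUU : (U : Matrix β β ℝ) * star (U : Matrix β β ℝ) = 1 :=
    Matrix.mem_unitaryGroup_iff.mp U.2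
  have hUU' : star (U : Matrix β β ℝ) * (U : Matrix β β ℝ) = 1 :=
    Matrix.mem_unitaryGroup_iff'.mp U.2
  have hscalar : (Matrix.scalar β (X : ℝ[X]))
      = mC (U : Matrix β β ℝ) * Matrix.scalar β (X : ℝ[X]) * mC (star (U : Matrix β β ℝ)) := by
    rw [mul_assoc, (Matrix.scalar_commute (X : ℝ[X]) (fun M => Commute.all _ _) _).eq,
      ← mul_assoc, ← _root_.map_mul, hUU, _root_.map_one, one_mul]
  have key : mC (U : Matrix β β ℝ) * charmatrix D * mC (star (U : Matrix β β ℝ))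
      = charmatrix ((U : Matrix β β ℝ) * D * star (U : Matrix β β ℝ)) := by
    rw [charmatrix, charmatrix, _root_.map_mul, _root_.map_mul, mul_sub, sub_mul, ← hscalar]
  rw [Matrix.charpoly, Matrix.charpoly, ← key, det_mul, det_mul, mul_comm, ← mul_assoc,
    ← det_mul]
  have h1 : mC (star (U : Matrix β β ℝ)) * mC (U : Matrix β β ℝ) = 1 := by
    rw [← _root_.map_mul, hUU', _root_.map_one]
  rw [h1, det_one, one_mul]

lemma charpoly_hermitian (A : Matrix β β ℝ) (hA : A.IsHermitian) :
    A.charpoly = ∏ i : β, (X - C (hA.eigenvalues i)) := by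
  have hsp := hA.spectral_theorem
  have h1 : A.charpoly = (Matrix.diagonal (RCLike.ofReal ∘ hA.eigenvalues) :
      Matrix β β ℝ).charpoly := by
    conv_lhs => rw [hsp]
    exact charpoly_conj_unitary hA.eigenvectorUnitary _
  rw [h1]
  have h2 : charmatrix (Matrix.diagonal (RCLike.ofReal ∘ hA.eigenvalues) : Matrix β β ℝ)
      = Matrix.diagonal (fun i => (X : ℝ[X]) - C (hA.eigenvalues i)) := by
    ext i j
    by_cases h : i = j
    · subst h; simp [charmatrix_apply, Matrix.diagonal_apply_eq]
    · simp [charmatrix_apply, Matrix.diagonal_apply_ne _ h, Matrix.diagonal_apply_ne _ h]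
  rw [Matrix.charpoly, h2, Matrix.det_diagonal]

lemma roots_charpoly_hermitian (A : Matrix β β ℝ) (hA : A.IsHermitian) :
    A.charpoly.roots = Multiset.map hA.eigenvalues Finset.univ.val := by
  rw [charpoly_hermitian A hA]
  have : (∏ i : β, ((X : ℝ[X]) - C (hA.eigenvalues i)))
      = ((Multiset.map hA.eigenvalues Finset.univ.val).map fun a => (X : ℝ[X]) - C a).prod := by
    rw [Multiset.map_map]
    rfl
  rw [this, Polynomial.roots_multiset_prod_X_sub_C]

lemma splits_charpoly_hermitian (A : Matrix β β ℝ) (hA : A.IsHermitian) :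
    A.charpoly.Splits := by
  rw [charpoly_hermitian A hA]
  exact Polynomial.Splits.prod fun i _ => Polynomial.Splits.X_sub_C _

end Herm

noncomputable def aM {β : Type u} [Fintype β] (G : SimpleGraph β) : Matrix β β ℝ := by
  classical exact G.adjMatrix ℝ

lemma adjSpectrum_eq {β : Type u} [Fintype β] (G : SimpleGraph β) :
    adjSpectrum G = (aM G).charpoly.roots := rfl

lemma aM_apply {β : Type u} [Fintype β] (G : SimpleGraph β) (i j : β) :
    aM G i j = if G.Adj i j then 1 else 0 := by
  simp [aM]

lemma aM_hermitian {β : Type u} [Fintype β] (G : SimpleGraph β) : (aM G).IsHermitian := by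
  ext i j
  simp [Matrix.conjTranspose_apply, aM_apply, G.adj_comm]

lemma aM_lexProd {β α : Type u} [Fintype β] [Fintype α]
    (F : SimpleGraph β) (H : SimpleGraph α) (x y : β × α) :
    aM (lexProd F H) x y = aM F x.1 y.1 + (if x.1 = y.1 then aM H x.2 y.2 else 0) := by
  classical
  by_cases h : x.1 = y.1
  · have : ¬ F.Adj x.1 y.1 := by rw [h]; exact F.irrefl
    simp [aM_apply, lexProd, h, this]
  · simp [aM_apply, lexProd, h]

section Prod
variable {β α : Type u} [Fintype β] [Fintype α] (F : SimpleGraph β) (H : SimpleGraph α)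

lemma aM_mulVec_lexProd (v : β × α → ℝ) (b : β) (a : α) :
    (aM (lexProd F H) *ᵥ v) (b, a)
      = (∑ b', aM F b b' * (∑ a', v (b', a'))) + (aM H *ᵥ fun a' => v (b, a')) a := by
  classical
  simp only [Matrix.mulVec, dotProduct]
  rw [Fintype.sum_prod_type]
  simp_rw [aM_lexProd, add_mul, Finset.sum_add_distrib, ite_mul, zero_mul]
  congr 1
  · apply Finset.sum_congr rfl
    intro b' _
    rw [Finset.mul_sum]
  · rw [Finset.sum_comm]
    simp [Finset.sum_ite_eq]

end Prod

noncomputable section Steps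
variable {β α : Type u} [Fintype β] [Fintype α] (F : SimpleGraph β) (H : SimpleGraph α)

lemma aM_row_sum {q : ℕ} (hreg : ∀ v, gdeg H v = q) (a : α) :
    ∑ a', aM H a a' = (q : ℝ) := by
  classical
  have h := hreg a
  simp only [gdeg] at h
  have h2 : ∑ a', aM H a a' = ((univ.filter (H.Adj a)).card : ℝ) := by
    simp [aM_apply, Finset.sum_boole]
  rw [h2, ← SimpleGraph.neighborFinset_eq_filter]
  rw [show (H.neighborFinset a).card = H.degree a from rfl, h]

lemma aM_col_sum {q : ℕ} (hreg : ∀ v, gdeg H v = q) (a' : α) :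
    ∑ a, aM H a a' = (q : ℝ) := by
  rw [← aM_row_sum H hreg a']
  apply Finset.sum_congr rfl
  intro a _
  simp [aM_apply, H.adj_comm]

lemma aM_mulVec_const {q : ℕ} (hreg : ∀ v, gdeg H v = q) (c : ℝ) (a : α) :
    (aM H *ᵥ fun _ => c) a = q * c := by
  simp only [Matrix.mulVec, dotProduct]
  rw [← Finset.sum_mul, aM_row_sum H hreg]

end Steps

section Spectral
variable {β α : Type u} [Fintype β] [Fintype α]

lemma step_mem (F : SimpleGraph β) (H : SimpleGraph α) [Nonempty α] {q : ℕ}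
    (hreg : ∀ v, gdeg H v = q) {μ : ℝ} (hμ : μ ∈ adjSpectrum F) :
    ((Fintype.card α : ℝ) * μ + q) ∈ adjSpectrum (lexProd F H) := by
  classical
  rw [adjSpectrum_eq, root_charpoly_iff] at hμ ⊢
  obtain ⟨u, hu, hAu⟩ := hμ
  refine ⟨fun x => u x.1, ?_, ?_⟩
  · intro h0
    apply hu
    funext b
    have := congrFun h0 (b, Classical.arbitrary α)
    simpa using this
  · funext x
    obtain ⟨b, a⟩ := x
    rw [aM_mulVec_lexProd]
    have h1 : ∀ b' : β, (∑ a' : α, u b') = (Fintype.card α : ℝ) * u b' := by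
      intro b'; rw [Finset.sum_const, Finset.card_univ, nsmul_eq_mul]
    have h2 : (aM H *ᵥ fun _ => u b) a = (q : ℝ) * u b := aM_mulVec_const H hreg _ a
    simp only [h1, h2]
    have h3 : ∑ b', aM F b b' * ((Fintype.card α : ℝ) * u b')
        = (Fintype.card α : ℝ) * ∑ b', aM F b b' * u b' := by
      rw [Finset.mul_sum]; apply Finset.sum_congr rfl; intros; ring
    rw [h3]
    have h4 : (∑ b', aM F b b' * u b') = μ * u b := by
      have := congrFun hAu b
      simpa [Matrix.mulVec, dotProduct] using this
    rw [h4]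
    simp [Pi.smul_apply, smul_eq_mul]
    ring

lemma step_bound (F : SimpleGraph β) (H : SimpleGraph α) [Nonempty α] {q : ℕ}
    (hreg : ∀ v, gdeg H v = q) {x : ℝ} (hx : x ∈ adjSpectrum (lexProd F H)) :
    (∃ μ ∈ adjSpectrum F, x = (Fintype.card α : ℝ) * μ + q) ∨ x ∈ adjSpectrum H := by
  classical
  rw [adjSpectrum_eq, root_charpoly_iff] at hx
  obtain ⟨v, hv, hAv⟩ := hx
  set S : β → ℝ := fun b => ∑ a, v (b, a) with hS
  have key : ∀ b a, (∑ b', aM F b b' * S b') + (aM H *ᵥ fun a' => v (b, a')) a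
      = x * v (b, a) := by
    intro b a
    have := congrFun hAv (b, a)
    rw [aM_mulVec_lexProd] at this
    simpa using this
  by_cases hS0 : S = 0
  · right
    rw [adjSpectrum_eq, root_charpoly_iff]
    have hvb : ∃ b, (fun a => v (b, a)) ≠ 0 := by
      by_contra hall
      push_neg at hall
      apply hv
      funext y
      have := congrFun (hall y.1) y.2
      simpa using this
    obtain ⟨b, hb⟩ := hvb
    refine ⟨fun a => v (b, a), hb, ?_⟩
    funext a
    have h := key b a
    simp only [hS0, Pi.zero_apply, mul_zero, Finset.sum_const_zero, zero_add] at h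
    simpa using h
  · left
    have hn0 : (Fintype.card α : ℝ) ≠ 0 := by
      simp [Fintype.card_ne_zero]
    refine ⟨(x - q) / (Fintype.card α : ℝ), ?_, by field_simp; ring⟩
    rw [adjSpectrum_eq, root_charpoly_iff]
    refine ⟨S, hS0, ?_⟩
    funext b
    have h1 : ∑ a : α, ((∑ b', aM F b b' * S b') + (aM H *ᵥ fun a' => v (b, a')) a)
        = x * S b := by
      rw [show x * S b = ∑ a, x * v (b, a) from by rw [Finset.mul_sum]]
      exact Finset.sum_congr rfl fun a _ => key b a
    rw [Finset.sum_add_distrib, Finset.sum_const, Finset.card_univ, nsmul_eq_mul] at h1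
    have h2 : ∑ a, (aM H *ᵥ fun a' => v (b, a')) a = q * S b := by
      simp only [Matrix.mulVec, dotProduct]
      rw [Finset.sum_comm, show (q : ℝ) * S b = ∑ a' : α, q * v (b, a') from by
        rw [hS, Finset.mul_sum]]
      apply Finset.sum_congr rfl
      intro a' _
      rw [← Finset.sum_mul, aM_col_sum H hreg]
    rw [h2] at h1
    simp only [Matrix.mulVec, dotProduct, Pi.smul_apply, smul_eq_mul]
    rw [div_mul_eq_mul_div, eq_div_iff hn0]
    linarith [h1]

end Spectral

section Base
variable {α : Type u} [Fintype α]

lemma q_mem_adjSpectrum (H : SimpleGraph α) [Nonempty α] {q : ℕ}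
    (hreg : ∀ v, gdeg H v = q) : (q : ℝ) ∈ adjSpectrum H := by
  rw [adjSpectrum_eq, root_charpoly_iff]
  refine ⟨fun _ => 1, ?_, ?_⟩
  · intro h
    have := congrFun h (Classical.arbitrary α)
    simpa using this
  · funext a
    have := aM_mulVec_const H hreg 1 a
    simpa using this

lemma adjSpectrum_card (H : SimpleGraph α) : Multiset.card (adjSpectrum H) = Fintype.card α := by
  rw [adjSpectrum_eq, roots_charpoly_hermitian _ (aM_hermitian H)]
  simp

lemma adjSpectrum_sum (H : SimpleGraph α) : (adjSpectrum H).sum = 0 := by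
  rw [adjSpectrum_eq, ← Matrix.trace_eq_sum_roots_charpoly_of_splits
    (splits_charpoly_hermitian _ (aM_hermitian H))]
  simp [aM]

lemma base_ineq (H : SimpleGraph α) {n q : ℕ} (hn : Fintype.card α = n) (hn2 : 2 ≤ n)
    (hreg : ∀ v, gdeg H v = q) {lam : ℝ} (hmem : lam ∈ adjSpectrum H)
    (hleast : ∀ x ∈ adjSpectrum H, lam ≤ x) :
    ((n : ℝ) - 1) * lam + q ≤ 0 := by
  have hne : Nonempty α := Fintype.card_pos_iff.mp (by omega)
  have hq : (q : ℝ) ∈ adjSpectrum H := q_mem_adjSpectrum H hreg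
  have herase := Multiset.cons_erase hq
  have hsum : (q : ℝ) + ((adjSpectrum H).erase (q : ℝ)).sum = 0 := by
    rw [← Multiset.sum_cons, herase, adjSpectrum_sum]
  have hcard : Multiset.card ((adjSpectrum H).erase (q : ℝ)) = n - 1 := by
    rw [Multiset.card_erase_of_mem hq, adjSpectrum_card, hn, Nat.pred_eq_sub_one]
  have hbound : (Multiset.card ((adjSpectrum H).erase (q : ℝ))) • lam
      ≤ ((adjSpectrum H).erase (q : ℝ)).sum :=
    Multiset.card_nsmul_le_sum fun x hx => hleast x (Multiset.mem_of_mem_erase hx)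
  rw [hcard, nsmul_eq_mul] at hbound
  have hcast : ((n - 1 : ℕ) : ℝ) = (n : ℝ) - 1 := by
    have : (1 : ℕ) ≤ n := by omega
    push_cast [this]
    ring
  rw [hcast] at hbound
  linarith

end Base

/-- The least adjacency eigenvalue of the lexicographic power `H^k` of a
connected `q`-regular graph `H` of order `n ≥ 2` with at least one edge equals
`n^(k-1)·λₙ(H) + q·(n^(k-1) - 1)/(n - 1)`. -/
theorem least_eigenvalue_lexPow {α : Type u} [Fintype α]
    (H : SimpleGraph α) (n q : ℕ)
    (hn : Fintype.card α = n) (hn2 : 2 ≤ n) (hconn : H.Connected)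
    (hreg : ∀ v, gdeg H v = q) (hedge : H.edgeSet.Nonempty)
    (lam : ℝ) (hmem : lam ∈ adjSpectrum H) (hleast : ∀ x ∈ adjSpectrum H, lam ≤ x) :
    ∀ k : ℕ, 1 ≤ k →
      ((n : ℝ) ^ (k - 1) * lam + (q : ℝ) * ((n : ℝ) ^ (k - 1) - 1) / ((n : ℝ) - 1))
          ∈ adjSpectrum (lexPow H k) ∧
      ∀ x ∈ adjSpectrum (lexPow H k),
        (n : ℝ) ^ (k - 1) * lam + (q : ℝ) * ((n : ℝ) ^ (k - 1) - 1) / ((n : ℝ) - 1) ≤ x := by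
  classical
  have hne : Nonempty α := Fintype.card_pos_iff.mp (by omega)
  have hn2R : (2 : ℝ) ≤ (n : ℝ) := by exact_mod_cast hn2
  have hn1 : (n : ℝ) - 1 ≠ 0 := by linarith
  have hbase : ((n : ℝ) - 1) * lam + (q : ℝ) ≤ 0 := base_ineq H hn hn2 hreg hmem hleast
  have hcard : (Fintype.card α : ℝ) = (n : ℝ) := by exact_mod_cast hn
  set a : ℕ → ℝ := fun m => (n : ℝ) ^ m * lam + (q : ℝ) * ((n : ℝ) ^ m - 1) / ((n : ℝ) - 1)
    with ha
  have hQ : ∀ m : ℕ, a m ∈ adjSpectrum (lexPow H (m + 1)) ∧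
      (∀ x ∈ adjSpectrum (lexPow H (m + 1)), a m ≤ x) ∧ a m ≤ lam ∧
      ((n : ℝ) - 1) * a m + (q : ℝ) ≤ 0 := by
    intro m
    induction m with
    | zero =>
      have h0 : a 0 = lam := by simp [ha]
      rw [h0]
      exact ⟨hmem, hleast, le_refl _, hbase⟩
    | succ m ih =>
      obtain ⟨ihmem, ihlb, ihlam, ihineq⟩ := ih
      have hrec : a (m + 1) = (n : ℝ) * a m + (q : ℝ) := by
        rw [ha]
        simp only [pow_succ]
        field_simp
        ring
      have hle : a (m + 1) ≤ a m := by rw [hrec]; linarith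
      refine ⟨?_, ?_, by linarith, by nlinarith⟩
      · rw [hrec, ← hcard]
        exact step_mem (lexPow H (m + 1)) H hreg ihmem
      · intro x hx
        rcases step_bound (lexPow H (m + 1)) H hreg hx with ⟨μ, hμ, rfl⟩ | hxH
        · rw [hrec, hcard]
          have h1 := ihlb μ hμ
          nlinarith
        · have h1 : lam ≤ x := hleast x hxH
          linarith
  intro k hk
  obtain ⟨m, rfl⟩ : ∃ m, k = m + 1 := ⟨k - 1, by omega⟩
  have hm : m + 1 - 1 = m := rfl
  rw [hm]
  exact ⟨(hQ m).1, (hQ m).2.1⟩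
end

section
/- Let H be a connected q-regular graph of order n. Then for all integers k ≥ 1 and all nonnegative integers s, every eigenvalue of the multiset σ_A(H^k) \ {r_k}, with its multiplicity, belongs to the multiset σ_A(H^{k+s}), where r_k = q·(n^k − 1)/(n − 1) is the regularity degree of H^k (removed with multiplicity one). -/
open Matrix Finset

universe u

section MatrixAux

open Polynomial

variable {m : Type u} [Fintype m] [DecidableEq m]

lemma my_charpoly_diagonal (d : m → ℝ) :
    (Matrix.diagonal d).charpoly = ∏ i, (X - C (d i)) := by
  rw [Matrix.charpoly]
  have : charmatrix (Matrix.diagonal d) = Matrix.diagonal (fun i => (X : ℝ[X]) - C (d i)) := by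
    ext i j
    rcases eq_or_ne i j with rfl | h
    · simp [charmatrix_apply]
    · simp [charmatrix_apply, Matrix.diagonal_apply_ne _ h]
  rw [this, Matrix.det_diagonal]

lemma my_roots_charpoly_diagonal (d : m → ℝ) :
    (Matrix.diagonal d).charpoly.roots = Finset.univ.val.map d := by
  rw [my_charpoly_diagonal, Polynomial.roots_prod _ _
    (monic_prod_of_monic _ _ (fun i _ => monic_X_sub_C (d i))).ne_zero]
  rw [Multiset.bind, Multiset.join]
  simp only [Polynomial.roots_X_sub_C, Multiset.map_map, Function.comp]
  induction (Finset.univ : Finset m).val using Multiset.induction with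
  | empty => simp
  | cons a s ih => simp [ih]

lemma my_charpoly_conj (P Q A : Matrix m m ℝ) (h1 : P * Q = 1) (h2 : Q * P = 1) :
    (Q * A * P).charpoly = A.charpoly := by
  unfold Matrix.charpoly
  have key : charmatrix (Q * A * P) =
      (C : ℝ →+* ℝ[X]).mapMatrix Q * charmatrix A * (C : ℝ →+* ℝ[X]).mapMatrix P := by
    unfold charmatrix
    rw [mul_sub, sub_mul, _root_.map_mul, _root_.map_mul]
    congr 1
    · have hc := (Matrix.scalar_commute (n := m) (X : ℝ[X]) (fun r' => Commute.all _ _)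
        ((C : ℝ →+* ℝ[X]).mapMatrix Q)).eq
      rw [← hc, mul_assoc, ← RingHom.map_mul, h2, _root_.map_one, mul_one]
  have hdet : ((C : ℝ →+* ℝ[X]).mapMatrix Q).det * ((C : ℝ →+* ℝ[X]).mapMatrix P).det = 1 := by
    rw [← Matrix.det_mul, ← RingHom.map_mul, h2, _root_.map_one, Matrix.det_one]
  rw [key, Matrix.det_mul, Matrix.det_mul]
  calc ((C : ℝ →+* ℝ[X]).mapMatrix Q).det * (charmatrix A).det * ((C : ℝ →+* ℝ[X]).mapMatrix P).det
      = (charmatrix A).det * (((C : ℝ →+* ℝ[X]).mapMatrix Q).det * ((C : ℝ →+* ℝ[X]).mapMatrix P).det) := by ring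
    _ = (charmatrix A).det := by rw [hdet, mul_one]

end MatrixAux

section Herm

variable {m : Type u} [Fintype m] [DecidableEq m]

lemma my_conj_diag (A : Matrix m m ℝ) (hA : A.IsHermitian) (c q : ℝ) :
    (star (hA.eigenvectorUnitary : Matrix m m ℝ)) * (c • A + q • 1) *
        (hA.eigenvectorUnitary : Matrix m m ℝ)
      = Matrix.diagonal (fun i => c * hA.eigenvalues i + q) := by
  have hu : (star (hA.eigenvectorUnitary : Matrix m m ℝ)) * (hA.eigenvectorUnitary : Matrix m m ℝ) = 1 :=
    Matrix.mem_unitaryGroup_iff'.mp (hA.eigenvectorUnitary).2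
  have h1 : (star (hA.eigenvectorUnitary : Matrix m m ℝ)) * A * (hA.eigenvectorUnitary : Matrix m m ℝ)
      = Matrix.diagonal (RCLike.ofReal ∘ hA.eigenvalues) := by
    have := hA.conjStarAlgAut_star_eigenvectorUnitary
    rwa [Unitary.conjStarAlgAut_star_apply] at this
  rw [mul_add, add_mul]
  have hc : (star (hA.eigenvectorUnitary : Matrix m m ℝ)) * (c • A) *
      (hA.eigenvectorUnitary : Matrix m m ℝ) = c • Matrix.diagonal (RCLike.ofReal ∘ hA.eigenvalues) := by
    rw [Matrix.mul_smul, Matrix.smul_mul, h1]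
  have hq : (star (hA.eigenvectorUnitary : Matrix m m ℝ)) * (q • (1 : Matrix m m ℝ)) *
      (hA.eigenvectorUnitary : Matrix m m ℝ) = q • (1 : Matrix m m ℝ) := by
    rw [Matrix.mul_smul, Matrix.smul_mul, mul_one, hu]
  rw [hc, hq]
  ext i j
  rcases eq_or_ne i j with rfl | h
  · simp [RCLike.ofReal]
  · simp [Matrix.diagonal_apply_ne _ h, Matrix.one_apply_ne h]

lemma my_roots_charpoly_conj_aux (A : Matrix m m ℝ) (hA : A.IsHermitian) (c q : ℝ) :
    (c • A + q • (1 : Matrix m m ℝ)).charpoly.roots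
      = Finset.univ.val.map (fun i => c * hA.eigenvalues i + q) := by
  have hu : (star (hA.eigenvectorUnitary : Matrix m m ℝ)) * (hA.eigenvectorUnitary : Matrix m m ℝ) = 1 :=
    Matrix.mem_unitaryGroup_iff'.mp (hA.eigenvectorUnitary).2
  have hu' : (hA.eigenvectorUnitary : Matrix m m ℝ) * (star (hA.eigenvectorUnitary : Matrix m m ℝ)) = 1 :=
    Matrix.mem_unitaryGroup_iff.mp (hA.eigenvectorUnitary).2
  have := my_charpoly_conj (hA.eigenvectorUnitary : Matrix m m ℝ)
    (star (hA.eigenvectorUnitary : Matrix m m ℝ)) (c • A + q • 1) hu' hu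
  rw [← this, my_conj_diag A hA c q, my_roots_charpoly_diagonal]

lemma my_roots_charpoly_hermitian (A : Matrix m m ℝ) (hA : A.IsHermitian) :
    A.charpoly.roots = Finset.univ.val.map hA.eigenvalues := by
  have := my_roots_charpoly_conj_aux A hA 1 0
  simpa using this

lemma my_charpoly_blockDiagonal {o : Type u} [Fintype o] [DecidableEq o]
    (M : o → Matrix m m ℝ) :
    (Matrix.blockDiagonal M).charpoly = ∏ k, (M k).charpoly := by
  unfold Matrix.charpoly
  have : charmatrix (Matrix.blockDiagonal M) = Matrix.blockDiagonal (fun k => charmatrix (M k)) := by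
    ext ⟨i, a⟩ ⟨j, b⟩
    rcases eq_or_ne a b with rfl | h
    · rcases eq_or_ne i j with rfl | hij
      · simp [charmatrix_apply, Matrix.blockDiagonal_apply]
      · simp [charmatrix_apply, Matrix.blockDiagonal_apply, Matrix.diagonal_apply_ne,
          Prod.ext_iff, hij]
    · simp [charmatrix_apply, Matrix.blockDiagonal_apply_ne _ _ _ h,
        Matrix.diagonal_apply_ne, Prod.ext_iff, h]
  rw [this, Matrix.det_blockDiagonal]

end Herm

section GraphAux

open Polynomial SimpleGraph

variable {ι κ : Type u} [Fintype ι] [DecidableEq ι] [Fintype κ] [DecidableEq κ]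

lemma my_adj_lexProd (F : SimpleGraph ι) (G : SimpleGraph κ)
    [DecidableRel F.Adj] [DecidableRel G.Adj] [DecidableRel (lexProd F G).Adj] :
    (lexProd F G).adjMatrix ℝ =
      Matrix.kroneckerMap (· * ·) (F.adjMatrix ℝ) (Matrix.of fun _ _ => (1 : ℝ))
        + Matrix.kroneckerMap (· * ·) (1 : Matrix ι ι ℝ) (G.adjMatrix ℝ) := by
  ext ⟨i, a⟩ ⟨j, b⟩
  have hAdj : (lexProd F G).Adj (i, a) (j, b) ↔ (F.Adj i j ∨ (i = j ∧ G.Adj a b)) := Iff.rfl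
  simp only [SimpleGraph.adjMatrix_apply, Matrix.add_apply, Matrix.kroneckerMap_apply,
    Matrix.of_apply, Matrix.one_apply, hAdj]
  by_cases hF : F.Adj i j
  · have hij : i ≠ j := hF.ne
    simp [hF, hij]
  · by_cases hij : i = j
    · subst hij
      by_cases hG : G.Adj a b <;> simp [hF, hG]
    · simp [hF, hij]

lemma my_eigen_const (G : SimpleGraph κ) [DecidableRel G.Adj]
    (hG : (G.adjMatrix ℝ).IsHermitian) (q : ℕ) (hreg : ∀ v, G.degree v = q)
    (hconn : G.Connected) (j : κ) (hq : hG.eigenvalues j = q) :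
    ∀ a b : κ, hG.eigenvectorBasis j a = hG.eigenvectorBasis j b := by
  intro a b
  set v : κ → ℝ := ⇑(hG.eigenvectorBasis j) with hv
  have hlap : G.lapMatrix ℝ *ᵥ v = 0 := by
    have hmv : G.adjMatrix ℝ *ᵥ v = (q : ℝ) • v := by
      rw [hv]
      rw [hG.mulVec_eigenvectorBasis j, hq]
    rw [SimpleGraph.lapMatrix, Matrix.sub_mulVec, hmv]
    ext x
    simp only [Pi.sub_apply, Pi.smul_apply, smul_eq_mul, Pi.zero_apply]
    rw [SimpleGraph.degMatrix_mulVec_apply, hreg x]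
    ring
  have := (G.lapMatrix_mulVec_eq_zero_iff_forall_reachable).mp hlap
  exact this a b (hconn.preconnected a b)

lemma my_eigen_sum_zero (G : SimpleGraph κ) [DecidableRel G.Adj]
    (hG : (G.adjMatrix ℝ).IsHermitian) (q : ℕ) (hreg : ∀ v, G.degree v = q)
    (j : κ) (hq : hG.eigenvalues j ≠ q) :
    ∑ b, hG.eigenvectorBasis j b = 0 := by
  set v : κ → ℝ := ⇑(hG.eigenvectorBasis j) with hv
  have hmv : G.adjMatrix ℝ *ᵥ v = hG.eigenvalues j • v := hG.mulVec_eigenvectorBasis j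
  have h1 : ∑ a, (G.adjMatrix ℝ *ᵥ v) a = hG.eigenvalues j * ∑ a, v a := by
    rw [hmv]
    simp [Finset.mul_sum]
  have h2 : ∑ a, (G.adjMatrix ℝ *ᵥ v) a = (q : ℝ) * ∑ b, v b := by
    simp only [Matrix.mulVec, dotProduct]
    rw [Finset.sum_comm]
    rw [Finset.mul_sum]
    refine Finset.sum_congr rfl fun b _ => ?_
    have hcol : ∑ a, (G.adjMatrix ℝ) a b = (q : ℝ) := by
      have : ∀ a, (G.adjMatrix ℝ) a b = if G.Adj b a then (1 : ℝ) else 0 := by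
        intro a
        simp [SimpleGraph.adjMatrix_apply, G.adj_comm a b]
      simp_rw [this]
      rw [← SimpleGraph.degree_eq_sum_if_adj, hreg b]
    rw [← Finset.sum_mul, hcol]
  have h3 : (hG.eigenvalues j - (q : ℝ)) * ∑ a, v a = 0 := by
    rw [sub_mul, h1.symm.trans h2]
    ring
  rcases mul_eq_zero.mp h3 with h | h
  · exact absurd (sub_eq_zero.mp h) hq
  · exact h

end GraphAux


section KeyAux

open Polynomial SimpleGraph

variable {ι κ : Type u} [Fintype ι] [DecidableEq ι] [Fintype κ] [DecidableEq κ]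

lemma my_adj_isHermitian (G : SimpleGraph κ) [DecidableRel G.Adj] :
    (G.adjMatrix ℝ).IsHermitian := by
  rw [Matrix.IsHermitian, Matrix.conjTranspose_eq_transpose_of_trivial]
  exact G.isSymm_adjMatrix

lemma my_q_mem_roots (G : SimpleGraph κ) [DecidableRel G.Adj] [Nonempty κ] (q : ℕ)
    (hreg : ∀ v, G.degree v = q) : (q : ℝ) ∈ (G.adjMatrix ℝ).charpoly.roots := by
  rw [Polynomial.mem_roots']
  refine ⟨(G.adjMatrix ℝ).charpoly_monic.ne_zero, ?_⟩
  have h1 : Polynomial.eval (q : ℝ) (G.adjMatrix ℝ).charpoly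
      = ((charmatrix (G.adjMatrix ℝ)).map (Polynomial.eval (q : ℝ))).det := by
    rw [Matrix.charpoly, ← Polynomial.coe_evalRingHom, RingHom.map_det]
    rfl
  have h2 : (charmatrix (G.adjMatrix ℝ)).map (Polynomial.eval (q : ℝ))
      = Matrix.diagonal (fun _ => (q : ℝ)) - G.adjMatrix ℝ := by
    ext i j
    rcases eq_or_ne i j with rfl | h
    · simp [charmatrix_apply]
    · simp only [charmatrix_apply, Matrix.map_apply, Matrix.sub_apply,
        Matrix.diagonal_apply_ne _ h, Polynomial.eval_sub, Polynomial.eval_zero]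
      simp [apply_ite (Polynomial.eval ((q : ℝ)))]
  rw [Polynomial.IsRoot, h1, h2, ← Matrix.exists_mulVec_eq_zero_iff]
  refine ⟨fun _ => 1, ?_, ?_⟩
  · intro h0
    have := congrFun h0 (Classical.arbitrary κ)
    simp at this
  · ext x
    rw [Matrix.sub_mulVec]
    simp only [Pi.sub_apply, Matrix.mulVec_diagonal, mul_one, Pi.zero_apply,
      SimpleGraph.adjMatrix_mulVec_apply]
    rw [Finset.sum_const, ← SimpleGraph.degree, hreg x]
    simp

lemma my_bind_replicate (N : ℕ) (f : κ → ℝ) (s : Multiset κ) :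
    s.bind (fun a => Multiset.replicate N (f a)) = N • (s.map f) := by
  induction s using Multiset.induction with
  | empty => simp
  | cons a t ih =>
      rw [Multiset.cons_bind, Multiset.map_cons, ih, ← Multiset.singleton_add, smul_add,
        Multiset.nsmul_singleton]

lemma my_key (F : SimpleGraph ι) (G : SimpleGraph κ)
    [DecidableRel F.Adj] [DecidableRel G.Adj] [DecidableRel (lexProd F G).Adj]
    (q : ℕ) (hreg : ∀ v, G.degree v = q) (hconn : G.Connected) :
    ((lexProd F G).adjMatrix ℝ).charpoly.roots
      = ((F.adjMatrix ℝ).charpoly.roots).map (fun x => (Fintype.card κ : ℝ) * x + q)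
        + (Fintype.card ι) • (((G.adjMatrix ℝ).charpoly.roots).erase (q : ℝ)) := by
  classical
  haveI : Nonempty κ := hconn.nonempty
  have hGh : (G.adjMatrix ℝ).IsHermitian := my_adj_isHermitian G
  have hFh : (F.adjMatrix ℝ).IsHermitian := my_adj_isHermitian F
  have hu : (star (hGh.eigenvectorUnitary : Matrix κ κ ℝ)) * (hGh.eigenvectorUnitary : Matrix κ κ ℝ) = 1 :=
    Matrix.mem_unitaryGroup_iff'.mp (hGh.eigenvectorUnitary).2
  have hu' : (hGh.eigenvectorUnitary : Matrix κ κ ℝ) * (star (hGh.eigenvectorUnitary : Matrix κ κ ℝ)) = 1 :=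
    Matrix.mem_unitaryGroup_iff.mp (hGh.eigenvectorUnitary).2
  set U : Matrix κ κ ℝ := (hGh.eigenvectorUnitary : Matrix κ κ ℝ) with hU
  set eig : κ → ℝ := hGh.eigenvalues with heig
  set dJ : κ → ℝ := fun j => if eig j = (q : ℝ) then (Fintype.card κ : ℝ) else 0 with hdJ
  -- J * U = U * diagonal dJ
  have hJU : (Matrix.of fun _ _ => (1 : ℝ)) * U = U * Matrix.diagonal dJ := by
    ext a j
    rw [Matrix.mul_apply, Matrix.mul_diagonal]
    simp only [Matrix.of_apply, one_mul]
    have hUapp : ∀ b, U b j = hGh.eigenvectorBasis j b := fun b => rfl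
    by_cases hq : eig j = (q : ℝ)
    · have hconst := my_eigen_const G hGh q hreg hconn j hq
      have : ∀ b, U b j = U a j := by
        intro b; rw [hUapp, hUapp]; exact hconst b a
      rw [Finset.sum_congr rfl (fun b _ => this b), Finset.sum_const, hdJ]
      simp [hq, mul_comm]
    · have hsum := my_eigen_sum_zero G hGh q hreg j hq
      have : ∑ b, U b j = 0 := by
        rw [Finset.sum_congr rfl (fun b _ => hUapp b)]; exact hsum
      rw [this, hdJ]
      simp [hq]
  have hsUJU : star U * (Matrix.of fun _ _ => (1 : ℝ)) * U = Matrix.diagonal dJ := by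
    rw [mul_assoc, hJU, ← mul_assoc, hu, one_mul]
  have hsUAU : star U * (G.adjMatrix ℝ) * U = Matrix.diagonal eig := by
    have : (star (hGh.eigenvectorUnitary : Matrix κ κ ℝ)) * (G.adjMatrix ℝ) * (hGh.eigenvectorUnitary : Matrix κ κ ℝ)
        = Matrix.diagonal (RCLike.ofReal ∘ hGh.eigenvalues) := by
      have := hGh.conjStarAlgAut_star_eigenvectorUnitary
      rwa [Unitary.conjStarAlgAut_star_apply] at this
    rw [hU, this]
    congr 1
  -- the distinguished index
  obtain ⟨i₀, hi₀⟩ : ∃ i₀, eig i₀ = (q : ℝ) := by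
    have hmem := my_q_mem_roots G q hreg
    rw [my_roots_charpoly_hermitian _ hGh] at hmem
    obtain ⟨i₀, _, h⟩ := Multiset.mem_map.mp hmem
    exact ⟨i₀, h⟩
  have huniq : ∀ j, eig j = (q : ℝ) → j = i₀ := by
    intro j hj
    by_contra hne
    have hinner : (inner ℝ (hGh.eigenvectorBasis j) (hGh.eigenvectorBasis i₀) : ℝ) = 0 :=
      hGh.eigenvectorBasis.orthonormal.2 hne
    have hconstj := my_eigen_const G hGh q hreg hconn j hj
    have hconst0 := my_eigen_const G hGh q hreg hconn i₀ hi₀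
    obtain ⟨a₀⟩ := ‹Nonempty κ›
    have hnz : ∀ j', eig j' = (q : ℝ) → hGh.eigenvectorBasis j' a₀ ≠ 0 := by
      intro j' hj' h0
      have hzero : hGh.eigenvectorBasis j' = 0 := by
        have hc := my_eigen_const G hGh q hreg hconn j' hj'
        ext x
        have := hc x a₀
        rw [this, h0]
        rfl
      have hnorm := hGh.eigenvectorBasis.orthonormal.1 j'
      rw [hzero, norm_zero] at hnorm
      exact one_ne_zero hnorm.symm
    have hexp : (inner ℝ (hGh.eigenvectorBasis j) (hGh.eigenvectorBasis i₀) : ℝ)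
        = ∑ x : κ, hGh.eigenvectorBasis j x * hGh.eigenvectorBasis i₀ x := by
      simp [PiLp.inner_apply, RCLike.inner_apply, starRingEnd_apply, mul_comm]
    rw [hexp] at hinner
    have : ∑ x : κ, hGh.eigenvectorBasis j x * hGh.eigenvectorBasis i₀ x
        = (Fintype.card κ : ℝ) * (hGh.eigenvectorBasis j a₀ * hGh.eigenvectorBasis i₀ a₀) := by
      rw [Finset.sum_congr rfl (fun x _ => by rw [hconstj x a₀, hconst0 x a₀]),
        Finset.sum_const]
      simp [mul_comm]
    rw [this] at hinner
    rcases mul_eq_zero.mp hinner with h | h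
    · exact absurd h (by positivity)
    · exact absurd h (mul_ne_zero (hnz j hj) (hnz i₀ hi₀))
  -- conjugation
  set P : Matrix (ι × κ) (ι × κ) ℝ := Matrix.kroneckerMap (· * ·) (1 : Matrix ι ι ℝ) U with hP
  set Q : Matrix (ι × κ) (ι × κ) ℝ := Matrix.kroneckerMap (· * ·) (1 : Matrix ι ι ℝ) (star U) with hQ
  have hPQ : P * Q = 1 := by
    rw [hP, hQ, ← Matrix.mul_kronecker_mul]
    rw [one_mul, hu', Matrix.one_kronecker_one]
  have hQP : Q * P = 1 := by
    rw [hP, hQ, ← Matrix.mul_kronecker_mul]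
    rw [one_mul, hu, Matrix.one_kronecker_one]
  have hconj : Q * ((lexProd F G).adjMatrix ℝ) * P
      = Matrix.blockDiagonal (fun a : κ => dJ a • (F.adjMatrix ℝ) + eig a • (1 : Matrix ι ι ℝ)) := by
    rw [my_adj_lexProd F G, mul_add, add_mul]
    have e1 : Q * (Matrix.kroneckerMap (· * ·) (F.adjMatrix ℝ) (Matrix.of fun _ _ => (1 : ℝ))) * P
        = Matrix.kroneckerMap (· * ·) (F.adjMatrix ℝ) (Matrix.diagonal dJ) := by
      rw [hQ, hP, ← Matrix.mul_kronecker_mul, ← Matrix.mul_kronecker_mul]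
      simp only [one_mul, mul_one]
      rw [hsUJU]
    have e2 : Q * (Matrix.kroneckerMap (· * ·) (1 : Matrix ι ι ℝ) (G.adjMatrix ℝ)) * P
        = Matrix.kroneckerMap (· * ·) (1 : Matrix ι ι ℝ) (Matrix.diagonal eig) := by
      rw [hQ, hP, ← Matrix.mul_kronecker_mul, ← Matrix.mul_kronecker_mul]
      simp only [one_mul, mul_one]
      rw [hsUAU]
    rw [e1, e2]
    ext ⟨i, a⟩ ⟨j, b⟩
    rcases eq_or_ne a b with rfl | hab
    · simp [Matrix.kroneckerMap_apply, Matrix.blockDiagonal_apply, Matrix.diagonal_apply_eq,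
        mul_comm]
    · simp [Matrix.kroneckerMap_apply, Matrix.blockDiagonal_apply, hab,
        Matrix.diagonal_apply_ne _ hab]
  have hcp : ((lexProd F G).adjMatrix ℝ).charpoly
      = ∏ a : κ, (dJ a • (F.adjMatrix ℝ) + eig a • (1 : Matrix ι ι ℝ)).charpoly := by
    rw [← my_charpoly_conj P Q _ hPQ hQP, hconj, my_charpoly_blockDiagonal]
  have hprodne : (∏ a : κ, (dJ a • (F.adjMatrix ℝ) + eig a • (1 : Matrix ι ι ℝ)).charpoly) ≠ 0 :=
    (monic_prod_of_monic _ _ (fun a _ => Matrix.charpoly_monic _)).ne_zero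
  rw [hcp, Polynomial.roots_prod _ _ hprodne]
  have huniv : (Finset.univ : Finset κ).val = i₀ ::ₘ (Finset.univ : Finset κ).val.erase i₀ :=
    (Multiset.cons_erase (Finset.mem_univ i₀)).symm
  rw [huniv, Multiset.cons_bind]
  have hblock0 : ((dJ i₀ • (F.adjMatrix ℝ) + eig i₀ • (1 : Matrix ι ι ℝ)).charpoly).roots
      = ((F.adjMatrix ℝ).charpoly.roots).map (fun x => (Fintype.card κ : ℝ) * x + q) := by
    have hdJ0 : dJ i₀ = (Fintype.card κ : ℝ) := by rw [hdJ]; simp [hi₀]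
    rw [hdJ0, my_roots_charpoly_conj_aux _ hFh, my_roots_charpoly_hermitian _ hFh,
      Multiset.map_map]
    rw [hi₀]
    rfl
  have hblockrest : ∀ a ∈ (Finset.univ : Finset κ).val.erase i₀,
      ((dJ a • (F.adjMatrix ℝ) + eig a • (1 : Matrix ι ι ℝ)).charpoly).roots
        = Multiset.replicate (Fintype.card ι) (eig a) := by
    intro a ha
    have hane : a ≠ i₀ := ((Finset.univ.nodup.mem_erase_iff).mp ha).1
    have hqa : eig a ≠ (q : ℝ) := fun h => hane (huniq a h)
    rw [hdJ]
    simp only [if_neg hqa]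
    rw [my_roots_charpoly_conj_aux _ hFh]
    rw [Multiset.map_congr rfl (fun i _ => by ring : ∀ i ∈ (Finset.univ : Finset ι).val,
      0 * hFh.eigenvalues i + eig a = eig a)]
    rw [Multiset.map_const']
    congr 1
  rw [hblock0, Multiset.bind_congr hblockrest, my_bind_replicate]
  congr 1
  have herase : ((G.adjMatrix ℝ).charpoly.roots).erase (q : ℝ)
      = Multiset.map eig ((Finset.univ : Finset κ).val.erase i₀) := by
    rw [my_roots_charpoly_hermitian _ hGh, ← heig]
    conv_lhs => rw [huniv]
    rw [Multiset.map_cons, hi₀, Multiset.erase_cons_head]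
  rw [herase]

end KeyAux


section Assembly

open Polynomial

lemma my_geom (n k : ℕ) (hn : 1 ≤ n) :
    (n - 1) * ∑ i ∈ Finset.range k, n ^ i = n ^ k - 1 := by
  induction k with
  | zero => simp
  | succ k ih =>
      rw [Finset.sum_range_succ, Nat.mul_add, ih]
      have h1 : 1 ≤ n ^ k := Nat.one_le_pow _ _ hn
      have h3 : n * n ^ k = n ^ (k + 1) := (pow_succ' n k).symm
      have h4 : (n - 1) * n ^ k = n * n ^ k - n ^ k := by rw [Nat.sub_mul, one_mul]
      have h5 : n ^ k ≤ n ^ (k + 1) := Nat.pow_le_pow_right hn (by omega)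
      omega

lemma my_div_geom (n k : ℕ) (hn : 2 ≤ n) :
    (n ^ k - 1) / (n - 1) = ∑ i ∈ Finset.range k, n ^ i := by
  rw [← my_geom n k (by omega), Nat.mul_div_cancel_left _ (by omega)]

lemma my_rk_succ (n q k : ℕ) (hn : 1 ≤ n) (h1 : n = 1 → q = 0) :
    q * ((n ^ (k + 1) - 1) / (n - 1)) = n * (q * ((n ^ k - 1) / (n - 1))) + q := by
  rcases Nat.lt_or_ge n 2 with h | h
  · have : n = 1 := by omega
    subst this
    simp [h1 rfl]
  · rw [my_div_geom n (k + 1) h, my_div_geom n k h]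
    rw [Finset.sum_range_succ']
    simp only [pow_succ', pow_zero]
    rw [← Finset.mul_sum]
    ring

lemma my_rk_one (n q : ℕ) (hn : 1 ≤ n) (h1 : n = 1 → q = 0) :
    q * ((n ^ 1 - 1) / (n - 1)) = q := by
  rcases Nat.lt_or_ge n 2 with h | h
  · have : n = 1 := by omega
    subst this
    simp [h1 rfl]
  · rw [my_div_geom n 1 h]
    simp

lemma my_nsmul_mono {a b : ℕ} (S : Multiset ℝ) (h : a ≤ b) : a • S ≤ b • S := by
  obtain ⟨c, rfl⟩ := Nat.exists_eq_add_of_le h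
  rw [add_nsmul]
  exact Multiset.le_add_right _ _

lemma my_adjSpectrum_eq {β : Type u} [Fintype β] [DecidableEq β] (G : SimpleGraph β)
    [inst : DecidableRel G.Adj] :
    adjSpectrum G = ((G.adjMatrix ℝ).charpoly).roots := by
  unfold adjSpectrum
  congr!

lemma my_gdeg_eq {β : Type u} [Fintype β] (G : SimpleGraph β) [inst : DecidableRel G.Adj]
    (v : β) : gdeg G v = G.degree v := by
  unfold gdeg
  congr!

lemma my_card_powVert {α : Type u} [Fintype α] :
    ∀ k, 1 ≤ k → Fintype.card (powVert α k) = Fintype.card α ^ k := by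
  intro k hk
  induction k with
  | zero => omega
  | succ k ih =>
      rcases Nat.eq_or_lt_of_le hk with h | h
      · have : k = 0 := by omega
        subst this
        simp [powVert]
        rfl
      · have hk1 : 1 ≤ k := by omega
        obtain ⟨k', rfl⟩ : ∃ k', k = k' + 1 := ⟨k - 1, by omega⟩
        have : Fintype.card (powVert α (k' + 2)) =
            Fintype.card (powVert α (k' + 1)) * Fintype.card α := by
          have he : powVert α (k' + 2) = (powVert α (k' + 1) × α) := rfl
          rw [← Fintype.card_prod]
          congr!
        rw [this, ih hk1, ← pow_succ]

end Assembly


section Main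

open Polynomial

variable {α : Type u} [Fintype α]

/-- The regularity degree, as a real number. -/
noncomputable def myR (n q k : ℕ) : ℝ := ((q * ((n ^ k - 1) / (n - 1)) : ℕ) : ℝ)

lemma myR_succ (n q k : ℕ) (hn : 1 ≤ n) (h1 : n = 1 → q = 0) :
    myR n q (k + 1) = n * myR n q k + q := by
  unfold myR
  rw [my_rk_succ n q k hn h1]
  push_cast
  ring

lemma myR_one (n q : ℕ) (hn : 1 ≤ n) (h1 : n = 1 → q = 0) : myR n q 1 = q := by
  unfold myR
  rw [my_rk_one n q hn h1]

lemma my_q_zero (H : SimpleGraph α) [DecidableRel H.Adj] (q : ℕ)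
    (hreg : ∀ v, H.degree v = q) [Nonempty α] (h1 : Fintype.card α = 1) : q = 0 := by
  obtain ⟨v⟩ := ‹Nonempty α›
  rw [← hreg v]
  have hall : ∀ w, w = v := fun w => Fintype.card_le_one_iff.mp (le_of_eq h1) w v
  have hsub : H.neighborFinset v = ∅ := by
    ext w
    simp only [SimpleGraph.mem_neighborFinset, Finset.notMem_empty, iff_false]
    intro hadj
    exact hadj.ne' (hall w)
  simp [SimpleGraph.degree, hsub]

lemma my_spec_rec (H : SimpleGraph α) (q : ℕ) (hconn : H.Connected)
    (hreg : ∀ v, gdeg H v = q) (k : ℕ) (hk : 1 ≤ k) :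
    adjSpectrum (lexPow H (k + 1))
      = (adjSpectrum (lexPow H k)).map (fun x => (Fintype.card α : ℝ) * x + q)
        + (Fintype.card α) ^ k • ((adjSpectrum H).erase (q : ℝ)) := by
  classical
  have hreg' : ∀ v, H.degree v = q := fun v => by rw [← my_gdeg_eq H v]; exact hreg v
  obtain ⟨k', rfl⟩ : ∃ k', k = k' + 1 := ⟨k - 1, by omega⟩
  calc adjSpectrum (lexPow H (k' + 2))
      = ((lexProd (lexPow H (k' + 1)) H).adjMatrix ℝ).charpoly.roots := by
        rw [my_adjSpectrum_eq (lexPow H (k' + 2))]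
        congr!
    _ = (((lexPow H (k' + 1)).adjMatrix ℝ).charpoly.roots).map
          (fun x => (Fintype.card α : ℝ) * x + q)
        + (Fintype.card (powVert α (k' + 1)))
            • ((((H.adjMatrix ℝ).charpoly.roots)).erase (q : ℝ)) :=
        my_key (lexPow H (k' + 1)) H q hreg' hconn
    _ = _ := by
        rw [← my_adjSpectrum_eq (lexPow H (k' + 1)), ← my_adjSpectrum_eq H,
          my_card_powVert (k' + 1) (by omega)]

lemma my_mem_spec (H : SimpleGraph α) (q : ℕ) (hconn : H.Connected)
    (hreg : ∀ v, gdeg H v = q) :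
    ∀ k, 1 ≤ k → myR (Fintype.card α) q k ∈ adjSpectrum (lexPow H k) := by
  classical
  haveI : Nonempty α := hconn.nonempty
  have hn1 : 1 ≤ Fintype.card α := Fintype.card_pos
  have hreg' : ∀ v, H.degree v = q := fun v => by rw [← my_gdeg_eq H v]; exact hreg v
  have hq1 : Fintype.card α = 1 → q = 0 := my_q_zero H q hreg'
  intro k hk
  induction k with
  | zero => omega
  | succ k ih =>
      rcases Nat.eq_or_lt_of_le hk with h | h
      · have hk0 : k = 0 := by omega
        subst hk0
        rw [myR_one _ _ hn1 hq1]
        have h0 : adjSpectrum (lexPow H 1) = adjSpectrum H := rfl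
        rw [h0, my_adjSpectrum_eq H]
        exact my_q_mem_roots H q hreg'
      · have hk1 : 1 ≤ k := by omega
        rw [my_spec_rec H q hconn hreg k hk1, myR_succ _ _ _ hn1 hq1]
        exact Multiset.mem_add.mpr (Or.inl (Multiset.mem_map_of_mem _ (ih hk1)))

lemma my_erase_decomp (H : SimpleGraph α) (q : ℕ) (hconn : H.Connected)
    (hreg : ∀ v, gdeg H v = q) (k : ℕ) (hk : 1 ≤ k) :
    (adjSpectrum (lexPow H (k + 1))).erase (myR (Fintype.card α) q (k + 1))
      = ((adjSpectrum (lexPow H k)).erase (myR (Fintype.card α) q k)).map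
          (fun x => (Fintype.card α : ℝ) * x + q)
        + (Fintype.card α) ^ k • ((adjSpectrum H).erase (q : ℝ)) := by
  classical
  haveI : Nonempty α := hconn.nonempty
  have hn1 : 1 ≤ Fintype.card α := Fintype.card_pos
  have hreg' : ∀ v, H.degree v = q := fun v => by rw [← my_gdeg_eq H v]; exact hreg v
  have hq1 : Fintype.card α = 1 → q = 0 := my_q_zero H q hreg'
  have hf : Function.Injective (fun x : ℝ => (Fintype.card α : ℝ) * x + q) := by
    intro a b hab
    have hne : (Fintype.card α : ℝ) ≠ 0 := Nat.cast_ne_zero.mpr (by omega)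
    have h2 : (Fintype.card α : ℝ) * a = (Fintype.card α : ℝ) * b := by
      have := congrArg (fun y => y - (q : ℝ)) hab
      simpa using this
    exact mul_left_cancel₀ hne h2
  rw [my_spec_rec H q hconn hreg k hk, myR_succ _ _ _ hn1 hq1]
  rw [Multiset.erase_add_left_pos _
    (Multiset.mem_map_of_mem _ (my_mem_spec H q hconn hreg k hk))]
  rw [← Multiset.map_erase _ hf]

lemma my_step (H : SimpleGraph α) (q : ℕ) (hconn : H.Connected)
    (hreg : ∀ v, gdeg H v = q) :
    ∀ k, 1 ≤ k →
      (adjSpectrum (lexPow H k)).erase (myR (Fintype.card α) q k)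
        ≤ (adjSpectrum (lexPow H (k + 1))).erase (myR (Fintype.card α) q (k + 1)) := by
  classical
  haveI : Nonempty α := hconn.nonempty
  have hn1 : 1 ≤ Fintype.card α := Fintype.card_pos
  have hreg' : ∀ v, H.degree v = q := fun v => by rw [← my_gdeg_eq H v]; exact hreg v
  have hq1 : Fintype.card α = 1 → q = 0 := my_q_zero H q hreg'
  intro k hk
  induction k with
  | zero => omega
  | succ k ih =>
      rcases Nat.eq_or_lt_of_le hk with h | h
      · have hk0 : k = 0 := by omega
        subst hk0
        rw [my_erase_decomp H q hconn hreg 1 le_rfl]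
        have hS : (adjSpectrum (lexPow H 1)).erase (myR (Fintype.card α) q 1)
            = (adjSpectrum H).erase (q : ℝ) := by
          have h0 : adjSpectrum (lexPow H 1) = adjSpectrum H := rfl
          rw [h0, myR_one _ _ hn1 hq1]
        rw [hS]
        refine le_trans ?_ (Multiset.le_add_left _ _)
        have : (1 : ℕ) • ((adjSpectrum H).erase (q : ℝ)) ≤
            (Fintype.card α) ^ 1 • ((adjSpectrum H).erase (q : ℝ)) :=
          my_nsmul_mono _ (by simpa using hn1)
        simpa using this
      · have hk1 : 1 ≤ k := by omega
        rw [my_erase_decomp H q hconn hreg k hk1,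
          my_erase_decomp H q hconn hreg (k + 1) (by omega)]
        exact add_le_add (Multiset.map_le_map (ih hk1))
          (my_nsmul_mono _ (Nat.pow_le_pow_right hn1 (by omega)))

end Main

/-- For a connected `q`-regular graph `H` of order `n`, the multiset
`σ_A(H^k)` minus one occurrence of the regularity degree `r_k = q·(n^k - 1)/(n - 1)` is
contained (with multiplicities) in the multiset `σ_A(H^(k+s))`. -/
theorem adjSpectrum_lexPow_mono {α : Type u} [Fintype α]
    (H : SimpleGraph α) (n q : ℕ)
    (hn : Fintype.card α = n) (hconn : H.Connected) (hreg : ∀ v, gdeg H v = q) :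
    ∀ k : ℕ, 1 ≤ k → ∀ s : ℕ,
      (adjSpectrum (lexPow H k)).erase ((q * ((n ^ k - 1) / (n - 1)) : ℕ) : ℝ)
        ≤ adjSpectrum (lexPow H (k + s)) := by
  classical
  subst hn
  intro k hk s
  have hchain : ∀ t : ℕ,
      (adjSpectrum (lexPow H k)).erase (myR (Fintype.card α) q k)
        ≤ (adjSpectrum (lexPow H (k + t))).erase (myR (Fintype.card α) q (k + t)) := by
    intro t
    induction t with
    | zero => exact le_rfl
    | succ t ih => exact le_trans ih (my_step H q hconn hreg (k + t) (by omega))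
  have hfin : (adjSpectrum (lexPow H k)).erase (myR (Fintype.card α) q k)
      ≤ adjSpectrum (lexPow H (k + s)) :=
    le_trans (hchain s) (Multiset.erase_le _ _)
  exact hfin
end

section
/- Let H be a connected graph of order n with Laplacian eigenvalues μ_1(H) ≥ ... ≥ μ_n(H). Then for every integer k ≥ 1, the largest Laplacian eigenvalue of the lexicographic power H^k satisfies μ_1(H^k) = n^{k−1}·μ_1(H). -/
open Matrix Finset

universe u

set_option linter.unusedSectionVars false
open Polynomial

section Spectral
variable {ι : Type*} [Fintype ι] [DecidableEq ι]

lemma myEvalCharpoly (M : Matrix ι ι ℝ) (t : ℝ) :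
    (M.charpoly).eval t = (Matrix.diagonal (fun _ => t) - M).det := by
  rw [Matrix.charpoly, ← Polynomial.coe_evalRingHom, RingHom.map_det]
  congr 1
  ext i j
  by_cases h : i = j <;>
    simp [Matrix.charmatrix_apply, Matrix.diagonal_apply, h]

lemma myRootIff (M : Matrix ι ι ℝ) (t : ℝ) :
    t ∈ M.charpoly.roots ↔ ∃ v ≠ (0 : ι → ℝ), M.mulVec v = t • v := by
  rw [Polynomial.mem_roots (M.charpoly_monic.ne_zero), Polynomial.IsRoot.def, myEvalCharpoly,
    ← Matrix.exists_mulVec_eq_zero_iff]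
  constructor
  · rintro ⟨v, hv, h⟩
    refine ⟨v, hv, ?_⟩
    rw [Matrix.sub_mulVec] at h
    have := sub_eq_zero.mp h
    rw [← this]
    ext i
    simp [Matrix.mulVec_diagonal]
  · rintro ⟨v, hv, h⟩
    refine ⟨v, hv, ?_⟩
    rw [Matrix.sub_mulVec, h]
    ext i
    simp [Matrix.mulVec_diagonal]

lemma myQuadBound (M : Matrix ι ι ℝ) (hM : M.IsHermitian) (c : ℝ)
    (hc : ∀ t ∈ M.charpoly.roots, t ≤ c) (v : ι → ℝ) :
    v ⬝ᵥ M.mulVec v ≤ c * (v ⬝ᵥ v) := by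
  classical
  set b := hM.eigenvectorBasis with hb
  set e := WithLp.equiv 2 (ι → ℝ) with he
  set w : ι → ι → ℝ := fun i => e (b i) with hwdef
  have hweq : ∀ i, e.symm (w i) = b i := fun i => e.symm_apply_apply (b i)
  have hMw : ∀ i, M.mulVec (w i) = hM.eigenvalues i • w i := fun i =>
    hM.mulVec_eigenvectorBasis i
  have hroot : ∀ i, hM.eigenvalues i ≤ c := by
    intro i
    apply hc
    rw [myRootIff]
    refine ⟨w i, fun h0 => b.orthonormal.ne_zero i ?_, hMw i⟩
    rw [← hweq i, h0]; rfl
  have hsym : Mᵀ = M := by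
    rw [← Matrix.conjTranspose_eq_transpose_of_trivial]; exact hM
  have hinner : ∀ x y : ι → ℝ, inner ℝ (e.symm x) (e.symm y) = x ⬝ᵥ y := by
    intro x y
    simp [he, PiLp.inner_apply, dotProduct, mul_comm]
  set u : EuclideanSpace ℝ ι := e.symm v with hu
  have hbiu : ∀ i, inner ℝ (b i) u = w i ⬝ᵥ v := by
    intro i; rw [← hweq i, hinner]
  have hbi : ∀ i, inner ℝ (b i) (e.symm (M.mulVec v))
      = hM.eigenvalues i * inner ℝ (b i) u := by
    intro i
    rw [← hweq i, hinner, Matrix.dotProduct_mulVec, ← Matrix.mulVec_transpose, hsym,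
      hMw i]
    rw [hweq i, hbiu i, smul_dotProduct]
    simp
  have key : v ⬝ᵥ M.mulVec v = ∑ i, hM.eigenvalues i * inner ℝ (b i) u^2 := by
    rw [← hinner v (M.mulVec v), ← b.sum_inner_mul_inner u]
    congr 1; ext i
    rw [hbi i, real_inner_comm u (b i)]
    ring
  have key2 : v ⬝ᵥ v = ∑ i, inner ℝ (b i) u^2 := by
    rw [← hinner v v, ← b.sum_inner_mul_inner u u]
    congr 1; ext i
    rw [real_inner_comm u (b i)]; ring
  rw [key, key2, Finset.mul_sum]
  apply Finset.sum_le_sum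
  intro i _
  exact mul_le_mul_of_nonneg_right (hroot i) (sq_nonneg _)

end Spectral

lemma lexProd_adj {α β : Type u} (H : SimpleGraph α) (G : SimpleGraph β) (x y : α × β) :
    (lexProd H G).Adj x y ↔ H.Adj x.1 y.1 ∨ (x.1 = y.1 ∧ G.Adj x.2 y.2) := Iff.rfl

section GraphLemmas
variable {V : Type u} [Fintype V] [DecidableEq V]

lemma lapMulVecEq (G : SimpleGraph V) [DecidableRel G.Adj] (v : V → ℝ) (i : V) :
    (G.lapMatrix ℝ *ᵥ v) i = ∑ j, if G.Adj i j then v i - v j else 0 := by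
  rw [SimpleGraph.lapMatrix_mulVec_apply, SimpleGraph.degree_eq_sum_if_adj,
    SimpleGraph.neighborFinset_eq_filter, Finset.sum_filter, Finset.sum_mul]
  rw [← Finset.sum_sub_distrib]
  congr 1; ext j
  by_cases h : G.Adj i j <;> simp [h]

lemma quadEq (G : SimpleGraph V) [DecidableRel G.Adj] (v : V → ℝ) :
    2 * (v ⬝ᵥ (G.lapMatrix ℝ *ᵥ v)) = ∑ i, ∑ j, if G.Adj i j then (v i - v j)^2 else 0 := by
  have := SimpleGraph.lapMatrix_toLinearMap₂' ℝ G v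
  rw [Matrix.toLinearMap₂'_apply'] at this
  rw [this]; ring

lemma quadLeCard (G : SimpleGraph V) [DecidableRel G.Adj] (v : V → ℝ) :
    v ⬝ᵥ (G.lapMatrix ℝ *ᵥ v) ≤ (Fintype.card V : ℝ) * (v ⬝ᵥ v) - (∑ i, v i)^2 := by
  have h2 : 2 * (v ⬝ᵥ (G.lapMatrix ℝ *ᵥ v)) ≤ ∑ i : V, ∑ j : V, (v i - v j)^2 := by
    rw [quadEq]
    apply Finset.sum_le_sum; intro i _
    apply Finset.sum_le_sum; intro j _
    by_cases h : G.Adj i j <;> simp [h, sq_nonneg]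
  have h3 : ∑ i : V, ∑ j : V, (v i - v j)^2
      = 2 * ((Fintype.card V : ℝ) * (v ⬝ᵥ v) - (∑ i, v i)^2) := by
    have : ∀ i j : V, (v i - v j)^2 = v i^2 - 2 * (v i * v j) + v j^2 := by intros; ring
    simp_rw [this, Finset.sum_add_distrib, Finset.sum_sub_distrib, Finset.sum_const,
      ← Finset.mul_sum, ← Finset.sum_mul, Finset.card_univ, nsmul_eq_mul]
    rw [dotProduct]
    simp_rw [← sq]
    rw [← Finset.mul_sum]
    ring
  linarith

lemma dotSelf_eq (v : V → ℝ) : v ⬝ᵥ v = ∑ i, v i ^ 2 := by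
  simp [dotProduct, sq]

lemma sum_ite_const' {c : V → Prop} [DecidablePred c] (k : ℝ) :
    (∑ x, if c x then k else 0) = k * ∑ x, if c x then (1:ℝ) else 0 := by
  rw [Finset.mul_sum]
  apply Finset.sum_congr rfl
  intro x _
  by_cases h : c x <;> simp [h]

/-- symmetric sum over adjacency -/
lemma adj_sym_sum (F : SimpleGraph V) [DecidableRel F.Adj] (g : V → ℝ) :
    (∑ x, ∑ x', if F.Adj x x' then g x' else 0)
      = ∑ x, (∑ x', if F.Adj x x' then (1:ℝ) else 0) * g x := by
  rw [Finset.sum_comm]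
  apply Finset.sum_congr rfl
  intro x' _
  have : ∀ x, (if F.Adj x x' then g x' else 0) = (if F.Adj x' x then g x' else 0) := by
    intro x
    by_cases h : F.Adj x x'
    · simp [h, h.symm]
    · simp [h, show ¬ F.Adj x' x from fun h' => h h'.symm]
  simp_rw [this, sum_ite_const' (g x'), mul_comm]

lemma adj_row_sum (F : SimpleGraph V) [DecidableRel F.Adj] (g : V → ℝ) :
    (∑ x, ∑ x', if F.Adj x x' then g x else 0)
      = ∑ x, (∑ x', if F.Adj x x' then (1:ℝ) else 0) * g x := by
  apply Finset.sum_congr rfl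
  intro x _
  rw [sum_ite_const' (g x), mul_comm]

end GraphLemmas

section Split
variable {ι α : Type u} [Fintype ι] [Fintype α] [DecidableEq ι] [DecidableEq α]
variable (F : SimpleGraph ι) (H : SimpleGraph α)
variable [DecidableRel F.Adj] [DecidableRel H.Adj] [DecidableRel (lexProd F H).Adj]

lemma lexProd_sum_split (p : ι × α) (t : ι × α → ℝ) :
    ∑ q, (if (lexProd F H).Adj p q then t q else 0)
      = (∑ x', if F.Adj p.1 x' then ∑ y', t (x', y') else 0)
        + ∑ y', if H.Adj p.2 y' then t (p.1, y') else 0 := by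
  rw [Fintype.sum_prod_type]
  have split : ∀ x' y', (if (lexProd F H).Adj p (x', y') then t (x', y') else 0)
      = (if F.Adj p.1 x' then t (x', y') else 0)
        + (if p.1 = x' ∧ H.Adj p.2 y' then t (x', y') else 0) := by
    intro x' y'
    by_cases h1 : F.Adj p.1 x'
    · have h2 : ¬(p.1 = x' ∧ H.Adj p.2 y') := fun ⟨he, _⟩ => F.loopless.irrefl p.1 (he ▸ h1)
      simp [lexProd_adj, h1, h2]
    · by_cases h2 : p.1 = x' ∧ H.Adj p.2 y' <;> simp [lexProd_adj, h1, h2]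
  simp_rw [split, Finset.sum_add_distrib]
  congr 1
  · congr 1; ext x'
    by_cases h : F.Adj p.1 x' <;> simp [h]
  · rw [Finset.sum_eq_single_of_mem p.1 (Finset.mem_univ _)]
    · apply Finset.sum_congr rfl
      intro y' _
      simp
    · intro b _ hb
      apply Finset.sum_eq_zero
      intro y' _
      simp [(Ne.symm hb : ¬ p.1 = b)]

/-- lifting an eigen-equation through the lexicographic product -/
lemma lexProd_lift_mulVec (f : ι → ℝ) (p : ι × α) :
    ((lexProd F H).lapMatrix ℝ *ᵥ (fun q => f q.1)) p
      = (Fintype.card α : ℝ) * ((F.lapMatrix ℝ *ᵥ f) p.1) := by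
  rw [lapMulVecEq, lexProd_sum_split F H p (fun q => f p.1 - f q.1)]
  have h2 : (∑ y', if H.Adj p.2 y' then f p.1 - f p.1 else 0) = 0 := by
    apply Finset.sum_eq_zero; intro y' _; simp
  rw [h2, add_zero, lapMulVecEq, Finset.mul_sum]
  apply Finset.sum_congr rfl
  intro x' _
  by_cases h : F.Adj p.1 x' <;> simp [h, Finset.sum_const, Finset.card_univ, nsmul_eq_mul, mul_sub]

/-- degree-sum splitting -/
lemma lexProd_dsum (p : ι × α) :
    (∑ q, if (lexProd F H).Adj p q then (1:ℝ) else 0)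
      = (Fintype.card α : ℝ) * (∑ x', if F.Adj p.1 x' then (1:ℝ) else 0)
        + ∑ y', if H.Adj p.2 y' then (1:ℝ) else 0 := by
  rw [lexProd_sum_split F H p (fun _ => (1:ℝ))]
  congr 1
  rw [Finset.mul_sum]
  apply Finset.sum_congr rfl
  intro x' _
  by_cases h : F.Adj p.1 x' <;> simp [h, Finset.sum_const, Finset.card_univ, nsmul_eq_mul]

lemma dsum_le_card (y : α) :
    (∑ y', if H.Adj y y' then (1:ℝ) else 0) + 1 ≤ (Fintype.card α : ℝ) := by
  have h0 : (∑ y', if H.Adj y y' then (1:ℝ) else 0)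
      = ∑ y' ∈ Finset.univ.erase y, if H.Adj y y' then (1:ℝ) else 0 := by
    rw [← Finset.add_sum_erase _ _ (Finset.mem_univ y)]
    simp
  have h1 : (∑ y' ∈ Finset.univ.erase y, if H.Adj y y' then (1:ℝ) else 0)
      ≤ ∑ y' ∈ Finset.univ.erase y, (1:ℝ) := by
    apply Finset.sum_le_sum; intro j _
    by_cases h : H.Adj y j <;> simp [h]
  have h2 : (∑ y' ∈ Finset.univ.erase y, (1:ℝ)) = (Fintype.card α : ℝ) - 1 := by
    rw [Finset.sum_const, Finset.card_erase_of_mem (Finset.mem_univ y), Finset.card_univ]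
    have hpos : 0 < Fintype.card α := Fintype.card_pos_iff.mpr ⟨y⟩
    rw [nsmul_eq_mul, mul_one, Nat.cast_sub hpos]
    simp
  linarith
end Split

section QuadStep
variable {ι α : Type u} [Fintype ι] [Fintype α] [DecidableEq ι] [DecidableEq α]
variable (F : SimpleGraph ι) (H : SimpleGraph α)
variable [DecidableRel F.Adj] [DecidableRel H.Adj] [DecidableRel (lexProd F H).Adj]

lemma lexProd_quad_le (c : ℝ)
    (hQF : ∀ f : ι → ℝ, f ⬝ᵥ (F.lapMatrix ℝ *ᵥ f) ≤ c * (f ⬝ᵥ f))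
    (hDF : ∀ x, (∑ x', if F.Adj x x' then (1:ℝ) else 0) + 1 ≤ c)
    (v : ι × α → ℝ) :
    v ⬝ᵥ ((lexProd F H).lapMatrix ℝ *ᵥ v)
      ≤ (Fintype.card α : ℝ) * c * (v ⬝ᵥ v) := by
  set n : ℝ := (Fintype.card α : ℝ) with hn
  set N : ι → ℝ := fun x => ∑ y, v (x, y) ^ 2 with hN
  set s : ι → ℝ := fun x => ∑ y, v (x, y) with hs
  set D : ι → ℝ := fun x => ∑ x', if F.Adj x x' then (1:ℝ) else 0 with hD
  -- inner expansion
  have hinner : ∀ x x' : ι, (∑ y, ∑ y', (v (x,y) - v (x',y'))^2)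
      = n * N x - 2 * (s x * s x') + n * N x' := by
    intro x x'
    have hexp : ∀ y y' : α, (v (x,y) - v (x',y'))^2
        = v (x,y)^2 - 2 * (v (x,y) * v (x',y')) + v (x',y')^2 := by intros; ring
    simp_rw [hexp, Finset.sum_add_distrib, Finset.sum_sub_distrib, Finset.sum_const,
      ← Finset.mul_sum, ← Finset.sum_mul, Finset.card_univ, nsmul_eq_mul]
    simp only [hN, hs, hn, ← Finset.mul_sum]
  -- main identity
  have e1 : 2 * (v ⬝ᵥ ((lexProd F H).lapMatrix ℝ *ᵥ v))
      = (∑ x, ∑ x', if F.Adj x x' then n * N x - 2 * (s x * s x') + n * N x' else 0)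
        + ∑ x, (∑ y, ∑ y', if H.Adj y y' then (v (x,y) - v (x,y'))^2 else 0) := by
    rw [quadEq, Fintype.sum_prod_type]
    have inner : ∀ x y, (∑ q, if (lexProd F H).Adj (x,y) q then (v (x,y) - v q)^2 else 0)
        = (∑ x', if F.Adj x x' then ∑ y', (v (x,y) - v (x',y'))^2 else 0)
          + ∑ y', if H.Adj y y' then (v (x,y) - v (x,y'))^2 else 0 := by
      intro x y
      exact lexProd_sum_split F H (x,y) (fun q => (v (x,y) - v q)^2)
    simp_rw [inner, Finset.sum_add_distrib]
    congr 1
    apply Finset.sum_congr rfl; intro x _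
    rw [Finset.sum_comm]
    apply Finset.sum_congr rfl; intro x' _
    by_cases h : F.Adj x x'
    · simp only [h, if_true]
      rw [← hinner x x']
    · simp [h]
  -- bound the H part
  have e3 : ∀ x, (∑ y, ∑ y', if H.Adj y y' then (v (x,y) - v (x,y'))^2 else 0)
      ≤ 2 * (n * N x - (s x)^2) := by
    intro x
    have q1 := quadEq H (fun y => v (x,y))
    have q2 := quadLeCard H (fun y => v (x,y))
    rw [dotSelf_eq] at q2
    rw [← q1]
    have hNx : (∑ y, v (x, y) ^ 2) = N x := rfl
    have hsx : (∑ y, v (x, y)) = s x := rfl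
    rw [hNx, hsx] at q2
    linarith [q2]
  -- expand the F part
  have e2 : (∑ x, ∑ x', if F.Adj x x' then n * N x - 2 * (s x * s x') + n * N x' else 0)
      = 2 * n * (∑ x, D x * N x) + 2 * (s ⬝ᵥ (F.lapMatrix ℝ *ᵥ s))
        - 2 * (∑ x, D x * (s x)^2) := by
    have split3 : ∀ x x', (if F.Adj x x' then n * N x - 2 * (s x * s x') + n * N x' else 0)
        = (if F.Adj x x' then n * N x else 0) + (if F.Adj x x' then n * N x' else 0)
          - (if F.Adj x x' then 2 * (s x * s x') else 0) := by
      intro x x'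
      by_cases h : F.Adj x x'
      · simp only [h, if_true]; ring
      · simp [h]
    simp_rw [split3, Finset.sum_sub_distrib, Finset.sum_add_distrib]
    have c1 : (∑ x, ∑ x', if F.Adj x x' then n * N x else 0) = n * ∑ x, D x * N x := by
      rw [adj_row_sum F (fun x => n * N x), Finset.mul_sum]
      apply Finset.sum_congr rfl; intro x _; ring
    have c2 : (∑ x, ∑ x', if F.Adj x x' then n * N x' else 0) = n * ∑ x, D x * N x := by
      rw [adj_sym_sum F (fun x => n * N x), Finset.mul_sum]
      apply Finset.sum_congr rfl; intro x _; ring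
    have c3 : (∑ x, ∑ x', if F.Adj x x' then (s x - s x')^2 else 0)
        = 2 * (∑ x, D x * (s x)^2) - 2 * (∑ x, ∑ x', if F.Adj x x' then s x * s x' else 0) := by
      have sp : ∀ x x', (if F.Adj x x' then (s x - s x')^2 else 0)
          = (if F.Adj x x' then (s x)^2 else 0) + (if F.Adj x x' then (s x')^2 else 0)
            - 2 * (if F.Adj x x' then s x * s x' else 0) := by
        intro x x'
        by_cases h : F.Adj x x'
        · simp only [h, if_true]; ring
        · simp [h]
      simp_rw [sp, Finset.sum_sub_distrib, Finset.sum_add_distrib, ← Finset.mul_sum]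
      rw [adj_row_sum F (fun x => (s x)^2), adj_sym_sum F (fun x => (s x)^2)]
      ring
    have c4 : (∑ x, ∑ x', if F.Adj x x' then (s x - s x')^2 else 0)
        = 2 * (s ⬝ᵥ (F.lapMatrix ℝ *ᵥ s)) := (quadEq F s).symm
    have c5 : (∑ x, ∑ x', if F.Adj x x' then 2 * (s x * s x') else 0)
        = 2 * (∑ x, ∑ x', if F.Adj x x' then s x * s x' else 0) := by
      rw [Finset.mul_sum]
      apply Finset.sum_congr rfl; intro x _
      rw [Finset.mul_sum]
      apply Finset.sum_congr rfl; intro x' _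
      by_cases h : F.Adj x x' <;> simp [h]
    rw [c1, c2, c5]
    have c6 : (∑ x, ∑ x', if F.Adj x x' then s x * s x' else 0)
        = (∑ x, D x * (s x)^2) - (s ⬝ᵥ (F.lapMatrix ℝ *ᵥ s)) := by linarith
    rw [c6]
    ring
  -- nonnegativity: n * N x - s x ^ 2 ≥ 0 (Cauchy-Schwarz)
  have hcs : ∀ x, (s x)^2 ≤ n * N x := by
    intro x
    have := sq_sum_le_card_mul_sum_sq (s := (Finset.univ : Finset α)) (f := fun y => v (x,y))
    simpa [hn, hs, hN, Finset.card_univ] using this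
  -- final assembly
  have e4 : s ⬝ᵥ (F.lapMatrix ℝ *ᵥ s) ≤ c * ∑ x, (s x)^2 := by
    have := hQF s
    rwa [dotSelf_eq] at this
  have e5 : (∑ x, (D x + 1) * (n * N x - (s x)^2)) ≤ c * ((n * ∑ x, N x) - ∑ x, (s x)^2) := by
    have : c * ((n * ∑ x, N x) - ∑ x, (s x)^2) = ∑ x, c * (n * N x - (s x)^2) := by
      rw [Finset.mul_sum, ← Finset.sum_sub_distrib, Finset.mul_sum]
    rw [this]
    apply Finset.sum_le_sum
    intro x _
    exact mul_le_mul_of_nonneg_right (hDF x) (by linarith [hcs x])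
  have e6 : v ⬝ᵥ v = ∑ x, N x := by
    rw [dotSelf_eq, Fintype.sum_prod_type]
  have e7 : 2 * (v ⬝ᵥ ((lexProd F H).lapMatrix ℝ *ᵥ v))
      ≤ 2 * n * (∑ x, D x * N x) + 2 * (c * ∑ x, (s x)^2) - 2 * (∑ x, D x * (s x)^2)
        + ∑ x, 2 * (n * N x - (s x)^2) := by
    rw [e1, e2]
    have := Finset.sum_le_sum (fun x (_ : x ∈ Finset.univ) => e3 x)
    linarith
  have e8 : (∑ x, (D x + 1) * (n * N x - (s x)^2))
      = n * (∑ x, D x * N x) - (∑ x, D x * (s x)^2) + (n * ∑ x, N x) - ∑ x, (s x)^2 := by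
    have hterm : ∀ x, (D x + 1) * (n * N x - (s x)^2)
        = n * (D x * N x) - D x * (s x)^2 + n * N x - (s x)^2 := by intro x; ring
    simp_rw [hterm]
    rw [Finset.sum_sub_distrib, Finset.sum_add_distrib, Finset.sum_sub_distrib,
      ← Finset.mul_sum, ← Finset.mul_sum]
  have hsum2 : (∑ x, 2 * (n * N x - (s x)^2)) = 2 * ((n * ∑ x, N x) - ∑ x, (s x)^2) := by
    rw [Finset.mul_sum, ← Finset.sum_sub_distrib, Finset.mul_sum]
  rw [e6]
  linarith [e5, e7, e8, hsum2]
end QuadStep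

section Base
variable {V : Type u} [Fintype V] [DecidableEq V]

lemma dotSelf_pos {v : V → ℝ} (hv : v ≠ 0) : 0 < v ⬝ᵥ v := by
  rcases Function.ne_iff.mp hv with ⟨i, hi⟩
  rw [dotSelf_eq]
  have h1 : (0:ℝ) < v i ^ 2 := (sq_nonneg (v i)).lt_of_ne (Ne.symm (pow_ne_zero 2 hi))
  have h2 : ∀ j ∈ Finset.univ, (0:ℝ) ≤ v j ^ 2 := fun j _ => sq_nonneg _
  exact lt_of_lt_of_le h1 (Finset.single_le_sum h2 (Finset.mem_univ i))

/-- If the quadratic form of the Laplacian is bounded by `c`, then `c ≥ deg + 1`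
for every non-isolated vertex. -/
lemma deg_add_one_le (G : SimpleGraph V) [DecidableRel G.Adj] (c : ℝ)
    (hQ : ∀ g : V → ℝ, g ⬝ᵥ (G.lapMatrix ℝ *ᵥ g) ≤ c * (g ⬝ᵥ g))
    (u : V) (hadj : ∃ w, G.Adj u w) :
    (∑ w, if G.Adj u w then (1:ℝ) else 0) + 1 ≤ c := by
  set d : ℝ := ∑ w, if G.Adj u w then (1:ℝ) else 0 with hd
  have hd0 : ∀ w, (0:ℝ) ≤ if G.Adj u w then (1:ℝ) else 0 := by
    intro w; by_cases h : G.Adj u w <;> simp [h]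
  have hd1 : (1:ℝ) ≤ d := by
    rcases hadj with ⟨w, hw⟩
    have := Finset.single_le_sum (fun j _ => hd0 j) (Finset.mem_univ w)
    rw [if_pos hw] at this
    exact this
  set z : V → ℝ := fun w => if w = u then d else if G.Adj u w then -1 else 0 with hz
  have hzu : z u = d := by simp [hz]
  have hznu : ∀ w, w ≠ u → G.Adj u w → z w = -1 := by
    intro w h1 h2; simp [hz, h1, h2]
  have hzz : z ⬝ᵥ z = d^2 + d := by
    rw [dotSelf_eq, ← Finset.add_sum_erase _ _ (Finset.mem_univ u), hzu]
    have : ∀ w ∈ Finset.univ.erase u, z w ^ 2 = if G.Adj u w then (1:ℝ) else 0 := by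
      intro w hw
      have hwne : w ≠ u := Finset.ne_of_mem_erase hw
      by_cases h : G.Adj u w
      · rw [hznu w hwne h]; simp [h]
      · simp [hz, hwne, h]
    rw [Finset.sum_congr rfl this]
    have : (∑ w ∈ Finset.univ.erase u, if G.Adj u w then (1:ℝ) else 0) = d := by
      rw [hd, ← Finset.add_sum_erase _ _ (Finset.mem_univ u)]
      simp [G.loopless.irrefl u]
    rw [this]
  -- lower bound on the quadratic form
  have hrow : (∑ j, if G.Adj u j then (z u - z j)^2 else 0) = d * (d+1)^2 := by
    have : ∀ j, (if G.Adj u j then (z u - z j)^2 else 0)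
        = (d+1)^2 * (if G.Adj u j then (1:ℝ) else 0) := by
      intro j
      by_cases h : G.Adj u j
      · rw [if_pos h, if_pos h, hzu, hznu j (fun hj => G.loopless.irrefl u (hj ▸ h)) h]; ring
      · simp [h]
    simp_rw [this, ← Finset.mul_sum, ← hd]
    ring
  have hcol : (∑ i ∈ Finset.univ.erase u, if G.Adj i u then (z i - z u)^2 else 0)
      = d * (d+1)^2 := by
    have : ∀ i ∈ Finset.univ.erase u, (if G.Adj i u then (z i - z u)^2 else 0)
        = (d+1)^2 * (if G.Adj u i then (1:ℝ) else 0) := by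
      intro i hi
      have hine : i ≠ u := Finset.ne_of_mem_erase hi
      by_cases h : G.Adj u i
      · rw [if_pos h.symm, hzu, hznu i hine h, if_pos h]; ring
      · rw [if_neg (fun h' => h h'.symm), if_neg h, mul_zero]
    rw [Finset.sum_congr rfl this, ← Finset.mul_sum]
    have : (∑ i ∈ Finset.univ.erase u, if G.Adj u i then (1:ℝ) else 0) = d := by
      rw [hd, ← Finset.add_sum_erase _ _ (Finset.mem_univ u)]
      simp [G.loopless.irrefl u]
    rw [this]
    ring
  have hlow : 2 * d * (d+1)^2 ≤ 2 * (z ⬝ᵥ (G.lapMatrix ℝ *ᵥ z)) := by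
    rw [quadEq]
    have hterm : ∀ i j : V, (0:ℝ) ≤ if G.Adj i j then (z i - z j)^2 else 0 := by
      intro i j; by_cases h : G.Adj i j <;> simp [h, sq_nonneg]
    rw [← Finset.add_sum_erase _ _ (Finset.mem_univ u), hrow]
    have h2 : ∀ i ∈ Finset.univ.erase u,
        (if G.Adj i u then (z i - z u)^2 else 0) ≤ ∑ j, if G.Adj i j then (z i - z j)^2 else 0 :=
      fun i _ => Finset.single_le_sum (fun j _ => hterm i j) (Finset.mem_univ u)
    have h3 := Finset.sum_le_sum h2
    rw [hcol] at h3
    linarith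
  have hup := hQ z
  rw [hzz] at hup
  have hdpos : 0 < d * (d + 1) := by nlinarith
  have key : d * (d+1) * (d + 1) ≤ d * (d+1) * c := by nlinarith
  have := le_of_mul_le_mul_left (by linarith [key] : d * (d+1) * (d+1) ≤ d * (d+1) * c) hdpos
  linarith
end Base

noncomputable def lapM {V : Type u} [Fintype V] (G : SimpleGraph V) : Matrix V V ℝ := by
  classical exact G.lapMatrix ℝ

noncomputable def cpRoots {V : Type u} [Fintype V] (M : Matrix V V ℝ) : Multiset ℝ := by
  classical exact M.charpoly.roots

lemma lapM_eq {V : Type u} [Fintype V] [DecidableEq V] (G : SimpleGraph V)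
    [DecidableRel G.Adj] : lapM G = G.lapMatrix ℝ := by
  unfold lapM
  congr!

lemma cpRoots_eq {V : Type u} [Fintype V] [DecidableEq V] (M : Matrix V V ℝ) :
    cpRoots M = M.charpoly.roots := by
  unfold cpRoots
  congr!

lemma lapSpectrum_eq {V : Type u} [Fintype V] (G : SimpleGraph V) :
    lapSpectrum G = cpRoots (lapM G) := by
  unfold lapSpectrum cpRoots lapM
  congr!


noncomputable def dsum {V : Type u} [Fintype V] (G : SimpleGraph V) (x : V) : ℝ := by
  classical exact ∑ y, if G.Adj x y then (1:ℝ) else 0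

lemma dsum_eq {V : Type u} [Fintype V] (G : SimpleGraph V) [DecidableRel G.Adj] (x : V) :
    dsum G x = ∑ y, if G.Adj x y then (1:ℝ) else 0 := by
  unfold dsum
  congr!

lemma powVert_nonempty {α : Type u} [Nonempty α] : ∀ k, Nonempty (powVert α k)
  | 0 => ⟨PUnit.unit⟩
  | 1 => inferInstanceAs (Nonempty α)
  | k + 2 =>
      have := powVert_nonempty (α := α) (k+1)
      inferInstanceAs (Nonempty (powVert α (k+1) × α))

lemma zero_mem_cpRoots {V : Type u} [Fintype V] [Nonempty V] (G : SimpleGraph V) :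
    (0:ℝ) ∈ cpRoots (lapM G) := by
  classical
  rw [cpRoots_eq, lapM_eq, myRootIff]
  refine ⟨fun _ => 1, ?_, ?_⟩
  · intro h0
    have := congrFun h0 (Classical.arbitrary V)
    simp at this
  · rw [SimpleGraph.lapMatrix_mulVec_const_eq_zero]
    ext i
    simp

lemma lexPow_bounds {α : Type u} [Fintype α] [Nonempty α] (H : SimpleGraph α) (c : ℝ)
    (hub : ∀ t ∈ cpRoots (lapM H), t ≤ c)
    (hmem : c ∈ cpRoots (lapM H))
    (hdeg : ∀ u, dsum H u + 1 ≤ c) :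
    ∀ j : ℕ, (∀ t ∈ cpRoots (lapM (lexPow H (j+1))), t ≤ (Fintype.card α : ℝ)^j * c)
      ∧ (Fintype.card α : ℝ)^j * c ∈ cpRoots (lapM (lexPow H (j+1)))
      ∧ ∀ x, dsum (lexPow H (j+1)) x + 1 ≤ (Fintype.card α : ℝ)^j * c := by
  classical
  intro j
  induction j with
  | zero =>
    have h1 : lapM (lexPow H 1) = lapM H := rfl
    have h2 : ∀ x, dsum (lexPow H 1) x = dsum H x := fun _ => rfl
    rw [pow_zero, one_mul]
    exact ⟨by rw [h1]; exact hub, by rw [h1]; exact hmem, fun x => by rw [h2]; exact hdeg x⟩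
  | succ j ih =>
    obtain ⟨ih1, ih2, ih3⟩ := ih
    set n : ℝ := (Fintype.card α : ℝ) with hn
    set F : SimpleGraph (powVert α (j+1)) := lexPow H (j+1) with hF
    letI iF : DecidableRel F.Adj := Classical.decRel _
    letI iH : DecidableRel H.Adj := Classical.decRel _
    letI iP : DecidableRel (lexProd F H).Adj := Classical.decRel _
    have hlapP : lapM (lexPow H (j+2)) = (lexProd F H).lapMatrix ℝ := by
      have : lapM (lexPow H (j+2)) = lapM (lexProd F H) := rfl
      rw [this, lapM_eq]
    have hlapF : lapM F = F.lapMatrix ℝ := lapM_eq F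
    have hcpP : cpRoots (lapM (lexPow H (j+2))) = ((lexProd F H).lapMatrix ℝ).charpoly.roots := by
      have : cpRoots (lapM (lexPow H (j+2))) = cpRoots (lapM (lexProd F H)) := rfl
      rw [this, lapM_eq]
      exact (cpRoots_eq _).trans (by congr!)
    -- quadratic form bound for F
    have hQF : ∀ f : powVert α (j+1) → ℝ,
        f ⬝ᵥ (F.lapMatrix ℝ *ᵥ f) ≤ (n^j * c) * (f ⬝ᵥ f) := by
      intro f
      apply myQuadBound _ (SimpleGraph.posSemidef_lapMatrix ℝ F).1
      intro t ht
      apply ih1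
      rw [hlapF, cpRoots_eq]
      exact ht
    have hDF : ∀ x, (∑ x', if F.Adj x x' then (1:ℝ) else 0) + 1 ≤ n^j * c := by
      intro x
      have := ih3 x
      rwa [dsum_eq] at this
    have hpow : n^(j+1) * c = n * (n^j * c) := by rw [pow_succ]; ring
    refine ⟨?_, ?_, ?_⟩
    · show ∀ t ∈ cpRoots (lapM (lexPow H (j+2))), t ≤ n^(j+1) * c
      intro t ht
      rw [hcpP, myRootIff] at ht
      obtain ⟨v, hv, heq⟩ := ht
      have hquad := lexProd_quad_le F H (n^j * c) hQF hDF v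
      have hdot : v ⬝ᵥ ((lexProd F H).lapMatrix ℝ *ᵥ v) = t * (v ⬝ᵥ v) := by
        rw [heq]
        simp [dotProduct_smul]
      rw [hdot] at hquad
      have hvv := dotSelf_pos hv
      rw [hpow]
      exact le_of_mul_le_mul_right hquad hvv
    · show (n^(j+1) * c) ∈ cpRoots (lapM (lexPow H (j+2)))
      rw [hcpP, myRootIff]
      have := ih2
      rw [hlapF, cpRoots_eq, myRootIff] at this
      obtain ⟨f, hf, heqf⟩ := this
      refine ⟨fun p => f p.1, ?_, ?_⟩
      · intro h0
        apply hf
        ext x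
        have := congrFun h0 (x, Classical.arbitrary α)
        exact this
      · ext p
        rw [lexProd_lift_mulVec F H f p, heqf]
        show n * ((n ^ j * c) • f) p.1 = (n^(j+1) * c) • (fun q : (powVert α (j+1)) × α => f q.1) p
        rw [hpow]
        simp [mul_assoc]
    · show ∀ p, dsum (lexPow H (j+2)) p + 1 ≤ n^(j+1) * c
      intro p
      have hsplit := lexProd_dsum F H p
      have hd1 : dsum (lexPow H (j+2)) p = ∑ q, if (lexProd F H).Adj p q then (1:ℝ) else 0 := by
        have : dsum (lexPow H (j+2)) p = dsum (lexProd F H) p := rfl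
        rw [this]
        exact dsum_eq _ _
      have hcard := dsum_le_card H p.2
      have hF1 := hDF p.1
      have hn0 : (0:ℝ) ≤ n := by rw [hn]; positivity
      rw [hpow]
      rw [hd1]
      rw [hsplit]
      have hmul : n * ((∑ x', if F.Adj p.1 x' then (1:ℝ) else 0) + 1) ≤ n * (n^j * c) :=
        mul_le_mul_of_nonneg_left hF1 hn0
      nlinarith [hmul, hcard, hn0]

/-- The largest Laplacian eigenvalue of `H^k`: if `nu : Fin (n^k) → ℝ`
lists the Laplacian eigenvalues of `H^k` in non-increasing order, then
`μ_1(H^k) = n^(k-1)·μ_1(H)`. -/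
theorem lapIndex_lexPow {α : Type u} [Fintype α]
    (H : SimpleGraph α) (n : ℕ) (hn : Fintype.card α = n) (hconn : H.Connected)
    (muH : Fin n → ℝ) (hanti : Antitone muH)
    (hspec : lapSpectrum H = Multiset.map muH Finset.univ.val) :
    ∀ k : ℕ, 1 ≤ k →
      ∀ nu : Fin (n ^ k) → ℝ, Antitone nu →
        lapSpectrum (lexPow H k) = Multiset.map nu Finset.univ.val →
        nu ⟨0, by
            have h0 : 0 < n := hn ▸ Fintype.card_pos_iff.mpr hconn.nonempty
            exact pow_pos h0 k⟩ =
          (n : ℝ) ^ (k - 1) *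
            muH ⟨0, hn ▸ Fintype.card_pos_iff.mpr hconn.nonempty⟩ := by
  classical
  subst hn
  intro k hk nu hanti' hspec'
  obtain ⟨j, rfl⟩ : ∃ j, k = j + 1 := ⟨k - 1, (Nat.succ_pred_eq_of_pos hk).symm⟩
  have hne : Nonempty α := hconn.nonempty
  have hpos : 0 < Fintype.card α := Fintype.card_pos_iff.mpr hne
  have hpowpos : 0 < Fintype.card α ^ (j+1) := pow_pos hpos (j+1)
  letI iH : DecidableRel H.Adj := Classical.decRel _
  have hspecH : cpRoots (lapM H) = Multiset.map muH Finset.univ.val := by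
    rw [← lapSpectrum_eq]; exact hspec
  have hspecNu : cpRoots (lapM (lexPow H (j+1))) = Multiset.map nu Finset.univ.val := by
    rw [← lapSpectrum_eq]; exact hspec'
  have hubH : ∀ t ∈ cpRoots (lapM H), t ≤ muH ⟨0, hpos⟩ := by
    intro t ht
    rw [hspecH, Multiset.mem_map] at ht
    obtain ⟨i, _, rfl⟩ := ht
    exact hanti (show (⟨0, hpos⟩ : Fin (Fintype.card α)) ≤ i by
      simp [Fin.le_def])
  have hmemH : muH ⟨0, hpos⟩ ∈ cpRoots (lapM H) := by
    rw [hspecH]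
    exact Multiset.mem_map_of_mem _ (Finset.mem_univ_val _)
  by_cases hcard : Fintype.card α = 1
  · -- trivial one-vertex case
    have h0H : (0:ℝ) ∈ cpRoots (lapM H) := zero_mem_cpRoots H
    rw [hspecH, Multiset.mem_map] at h0H
    obtain ⟨i, _, hi⟩ := h0H
    have hieq : i = ⟨0, hpos⟩ := by
      have := i.2
      ext
      omega
    rw [hieq] at hi
    haveI : Nonempty (powVert α (j+1)) := powVert_nonempty (j+1)
    have h0N : (0:ℝ) ∈ cpRoots (lapM (lexPow H (j+1))) := zero_mem_cpRoots _
    rw [hspecNu, Multiset.mem_map] at h0N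
    obtain ⟨i', _, hi'⟩ := h0N
    have hieq' : i' = ⟨0, hpowpos⟩ := by
      have hone : Fintype.card α ^ (j+1) = 1 := by rw [hcard]; exact one_pow _
      have h2 := i'.2
      ext
      omega
    rw [hieq'] at hi'
    calc nu ⟨0, hpowpos⟩ = 0 := hi'
      _ = (Fintype.card α : ℝ) ^ (j + 1 - 1) * muH ⟨0, hpos⟩ := by rw [hi]; ring
  · have hcard1 : 1 < Fintype.card α := lt_of_le_of_ne hpos (Ne.symm hcard)
    have hbridge : cpRoots (lapM H) = (H.lapMatrix ℝ).charpoly.roots := by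
      rw [lapM_eq, cpRoots_eq]
    have hQ : ∀ g : α → ℝ, g ⬝ᵥ (H.lapMatrix ℝ *ᵥ g) ≤ muH ⟨0, hpos⟩ * (g ⬝ᵥ g) := by
      intro g
      apply myQuadBound _ (SimpleGraph.posSemidef_lapMatrix ℝ H).1
      intro t ht
      exact hubH t (hbridge ▸ ht)
    have hadj : ∀ u : α, ∃ w, H.Adj u w := by
      intro u
      obtain ⟨v', hv'⟩ := Fintype.exists_ne_of_one_lt_card hcard1 u
      obtain ⟨w⟩ := hconn.preconnected u v'
      cases w with
      | nil => exact absurd rfl hv'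
      | cons h p => exact ⟨_, h⟩
    have hdeg : ∀ u, dsum H u + 1 ≤ muH ⟨0, hpos⟩ := by
      intro u
      rw [dsum_eq]
      exact deg_add_one_le H _ hQ u (hadj u)
    have main := lexPow_bounds H (muH ⟨0, hpos⟩) hubH hmemH hdeg j
    have le1 : (Fintype.card α : ℝ)^j * muH ⟨0, hpos⟩ ≤ nu ⟨0, hpowpos⟩ := by
      have hm := main.2.1
      rw [hspecNu, Multiset.mem_map] at hm
      obtain ⟨i, _, hi⟩ := hm
      rw [← hi]
      exact hanti' (show (⟨0, hpowpos⟩ : Fin (Fintype.card α ^ (j+1))) ≤ i by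
        simp [Fin.le_def])
    have le2 : nu ⟨0, hpowpos⟩ ≤ (Fintype.card α : ℝ)^j * muH ⟨0, hpos⟩ := by
      apply main.1
      rw [hspecNu]
      exact Multiset.mem_map_of_mem _ (Finset.mem_univ_val _)
    have : nu ⟨0, hpowpos⟩ = (Fintype.card α : ℝ)^j * muH ⟨0, hpos⟩ :=
      le_antisymm le2 le1
    calc nu ⟨0, hpowpos⟩ = (Fintype.card α : ℝ)^j * muH ⟨0, hpos⟩ := this
      _ = (Fintype.card α : ℝ)^(j + 1 - 1) * muH ⟨0, hpos⟩ := by norm_num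
end
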